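/- arXiv:1009.2677 — 7 statements merged into one kernel-verified Lean document; each statement's English description precedes it below -/
import Mathlib

section
/- Let V be a real inner product space of dimension 2n (n ≥ 1) with an orthogonal complex structure J, and let R be a curvature-like tensor on V. If R satisfies the identity R(x,y,z,u) = R(x,y,Jz,Ju) + R(x,Jy,z,Ju) + R(Jx,y,z,Ju) for all x, y, z, u ∈ V, then R satisfies R(x,y,z,u) = R(Jx,Jy,Jz,Ju) for all x, y, z, u ∈ V. -/
open scoped RealInnerProductSpace

/-- A curvature-like tensor on a real inner product space `V`, presented as a
(4-fold) multilinear map via iterated linear maps: it is antisymmetric in the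
first two and in the last two arguments, symmetric under swapping the two
pairs, and satisfies the first Bianchi identity. -/
def IsCurvatureLike {V : Type*} [NormedAddCommGroup V] [InnerProductSpace ℝ V]
    (R : V →ₗ[ℝ] V →ₗ[ℝ] V →ₗ[ℝ] V →ₗ[ℝ] ℝ) : Prop :=
  (∀ x y z u : V, R x y z u = - R y x z u) ∧
  (∀ x y z u : V, R x y z u = - R x y u z) ∧
  (∀ x y z u : V, R x y z u = R z u x y) ∧
  (∀ x y z u : V, R x y z u + R y z x u + R z x y u = 0)

theorem stmt_0 {V : Type*} [NormedAddCommGroup V] [InnerProductSpace ℝ V]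
    [FiniteDimensional ℝ V] (n : ℕ) (hn : 1 ≤ n)
    (hdim : Module.finrank ℝ V = 2 * n)
    (J : V →ₗ[ℝ] V)
    (hJ2 : ∀ x : V, J (J x) = -x)
    (hJorth : ∀ x y : V, ⟪J x, J y⟫ = ⟪x, y⟫)
    (R : V →ₗ[ℝ] V →ₗ[ℝ] V →ₗ[ℝ] V →ₗ[ℝ] ℝ)
    (hR : IsCurvatureLike R)
    (h1 : ∀ x y z u : V,
      R x y z u = R x y (J z) (J u) + R x (J y) z (J u) + R (J x) y z (J u)) :
    ∀ x y z u : V, R x y z u = R (J x) (J y) (J z) (J u) := by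
  intro x y z u
  have e1 := h1 x y z u
  have e2 := h1 x y (J z) (J u)
  have e3 := h1 x (J y) z (J u)
  have e4 := h1 x (J y) (J z) u
  have e5 := h1 (J x) y z (J u)
  simp only [hJ2, map_neg, LinearMap.neg_apply, neg_neg] at e2 e3 e4 e5
  have hneg : R (-x) y z u = -(R x y z u) := by
    rw [← neg_one_smul ℝ x, map_smul]
    simp
  rw [hneg] at e5
  linarith
end

section
/- Let V be a real inner product space of dimension 2n (n ≥ 2) with an orthogonal complex structure J, and let R be a curvature-like tensor on V satisfying R(x,y,z,u) = R(Jx,Jy,Jz,Ju) for all x, y, z, u. If R has constant antiholomorphic sectional curvature ν, then R = (1/6)ψ + ν R₁ − ((2n−1)/3) ν R₂, where ψ, R₁, R₂ are built from the inner product, J and the Ricci tensor S of R. -/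
open scoped RealInnerProductSpace

set_option maxHeartbeats 1600000

section auxZ
variable {V : Type*} [NormedAddCommGroup V] [InnerProductSpace ℝ V]

variable {V : Type*} [NormedAddCommGroup V] [InnerProductSpace ℝ V]

lemma sumlin {ι : Type*} [Fintype ι]
    (e : OrthonormalBasis ι ℝ V) (φ : V → ℝ)
    (h1 : ∀ a b : V, φ (a + b) = φ a + φ b)
    (h2 : ∀ (c : ℝ) (a : V), φ (c • a) = c * φ a) (v : V) :
    ∑ i, ⟪v, e i⟫ * φ (e i) = φ v := by
  have hv : ∑ i, ⟪e i, v⟫ • e i = v := by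
    simpa [OrthonormalBasis.repr_apply_apply] using e.sum_repr v
  let F : V →ₗ[ℝ] ℝ :=
    { toFun := φ, map_add' := h1, map_smul' := fun c a => by simp [h2, smul_eq_mul] }
  calc ∑ i, ⟪v, e i⟫ * φ (e i) = ∑ i, F (⟪e i, v⟫ • e i) := by
        simp [F, h2, real_inner_comm]
    _ = F (∑ i, ⟪e i, v⟫ • e i) := (map_sum F _ _).symm
    _ = φ v := by rw [hv]; rfl

lemma lemZ {ι : Type*} [Fintype ι] (e : OrthonormalBasis ι ℝ V)
    (J : V →ₗ[ℝ] V) (hJ2 : ∀ x : V, J (J x) = -x)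
    (hJorth : ∀ x y : V, ⟪J x, J y⟫ = ⟪x, y⟫)
    (T : V → V → V → V → ℝ)
    (ha1 : ∀ a b y z u : V, T (a + b) y z u = T a y z u + T b y z u)
    (hs1 : ∀ (c : ℝ) (a y z u : V), T (c • a) y z u = c * T a y z u)
    (ha2 : ∀ x a b z u : V, T x (a + b) z u = T x a z u + T x b z u)
    (hs2 : ∀ (c : ℝ) (x a z u : V), T x (c • a) z u = c * T x a z u)
    (ha3 : ∀ x y a b u : V, T x y (a + b) u = T x y a u + T x y b u)
    (hs3 : ∀ (c : ℝ) (x y a u : V), T x y (c • a) u = c * T x y a u)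
    (ha4 : ∀ x y z a b : V, T x y z (a + b) = T x y z a + T x y z b)
    (hs4 : ∀ (c : ℝ) (x y z a : V), T x y z (c • a) = c * T x y z a)
    (hsym1 : ∀ x y z u : V, T x y z u = - T y x z u)
    (hsym2 : ∀ x y z u : V, T x y z u = - T x y u z)
    (hsym3 : ∀ x y z u : V, T x y z u = T z u x y)
    (hbia : ∀ x y z u : V, T x y z u + T y z x u + T z x y u = 0)
    (hTJ : ∀ x y z u : V, T x y z u = T (J x) (J y) (J z) (J u))
    (hTric : ∀ x w : V, ∑ i, T x (e i) (e i) w = 0)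
    (hT0 : ∀ x y : V, ⟪J x, y⟫ = 0 → T x y y x = 0) :
    ∀ x y z u : V, T x y z u = 0 := by
  -- inner product facts
  have hswap : ∀ a b : V, ⟪J a, b⟫ = -⟪J b, a⟫ := by
    intro a b
    have h1 : ⟪J a, b⟫ = ⟪J (J a), J b⟫ := (hJorth _ _).symm
    rw [hJ2] at h1
    rw [h1, inner_neg_left, real_inner_comm]
  -- zero slot lemmas
  have hz1 : ∀ y z u : V, T 0 y z u = 0 := fun y z u => by
    simpa using hs1 0 0 y z u
  have hz2 : ∀ x z u : V, T x 0 z u = 0 := fun x z u => by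
    simpa using hs2 0 x 0 z u
  have hz3 : ∀ x y u : V, T x y 0 u = 0 := fun x y u => by
    simpa using hs3 0 x y 0 u
  -- diag
  have hd4 : ∀ x y z : V, T x y z z = 0 := fun x y z => by
    have := hsym2 x y z z; linarith
  -- neg lemmas
  have hn2 : ∀ x a z u : V, T x (-a) z u = - T x a z u := fun x a z u => by
    have := hs2 (-1) x a z u; simpa using this
  have hn3 : ∀ x y a u : V, T x y (-a) u = - T x y a u := fun x y a u => by
    have := hs3 (-1) x y a u; simpa using this
  have hn4 : ∀ x y z a : V, T x y z (-a) = - T x y z a := fun x y z a => by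
    have := hs4 (-1) x y z a; simpa using this
  have hsub2 : ∀ x a b z u : V, T x (a - b) z u = T x a z u - T x b z u := by
    intro x a b z u
    rw [sub_eq_add_neg, ha2, hn2]; ring
  have hsub3 : ∀ x y a b u : V, T x y (a - b) u = T x y a u - T x y b u := by
    intro x y a b u
    rw [sub_eq_add_neg, ha3, hn3]; ring
  -- middle symmetry with equal outer slots
  have hmid : ∀ a b c : V, T a b c a = T a c b a := by
    intro a b c
    have h1 : T a b c a = T c a a b := hsym3 a b c a
    have h2 : T c a a b = - T a c a b := hsym1 c a a b
    have h3 : T a c a b = - T a c b a := hsym2 a c a b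
    rw [h1, h2, h3]; ring
  -- outer symmetry
  have hout : ∀ a b c d : V, T a b c d = T d c b a := by
    intro a b c d
    have h1 : T a b c d = T c d a b := hsym3 a b c d
    have h2 : T c d a b = - T d c a b := hsym1 c d a b
    have h3 : T d c a b = - T d c b a := hsym2 d c a b
    rw [h1, h2, h3]; ring
  -- F2
  have hF2 : ∀ x y z : V, ⟪J x, y⟫ = 0 → ⟪J x, z⟫ = 0 → T x y z x = 0 := by
    intro x y z hy hz
    have h0 : T x (y + z) (y + z) x = 0 := by
      apply hT0; rw [inner_add_right, hy, hz]; ring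
    rw [ha2, ha3, ha3] at h0
    have h1 := hT0 x y hy
    have h2 := hT0 x z hz
    have h3 := hmid x y z
    linarith
  -- (4')
  have hZ4 : ∀ x y z : V,
      ⟪x,x⟫^2 * T x y z x =
        ⟪x,x⟫ * (⟪J x, y⟫ * T x (J x) z x + ⟪J x, z⟫ * T x (J x) y x)
          - ⟪J x, y⟫ * ⟪J x, z⟫ * T x (J x) (J x) x := by
    intro x y z
    by_cases hx : x = 0
    · simp [hx, hz1]
    · have hrx : ⟪x,x⟫ ≠ 0 := fun h => hx (inner_self_eq_zero.mp h)
      set rx := ⟪x,x⟫ with hrxdef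
      have hJxJx : ⟪J x, J x⟫ = rx := hJorth x x
      set α := ⟪J x, y⟫ / rx with hα
      set β := ⟪J x, z⟫ / rx with hβ
      have hy' : ⟪J x, y - α • J x⟫ = 0 := by
        rw [inner_sub_right, real_inner_smul_right, hJxJx, hα]
        field_simp; ring
      have hz' : ⟪J x, z - β • J x⟫ = 0 := by
        rw [inner_sub_right, real_inner_smul_right, hJxJx, hβ]
        field_simp; ring
      have h3 := hF2 x (y - α • J x) (z - β • J x) hy' hz'
      have hyy : y = (y - α • J x) + α • J x := by abel
      have hzz : z = (z - β • J x) + β • J x := by abel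
      have expand : T x y z x
          = α * T x (J x) z x + β * T x (J x) y x - α * β * T x (J x) (J x) x := by
        calc T x y z x = T x ((y - α • J x) + α • J x) z x := by rw [← hyy]
          _ = T x (y - α • J x) z x + α * T x (J x) z x := by rw [ha2, hs2]
          _ = T x (y - α • J x) ((z - β • J x) + β • J x) x + α * T x (J x) z x := by
              rw [← hzz]
          _ = β * T x (y - α • J x) (J x) x + α * T x (J x) z x := by
              rw [ha3, hs3, h3]; ring
          _ = β * T x (J x) (y - α • J x) x + α * T x (J x) z x := by rw [hmid]
          _ = β * (T x (J x) y x - α * T x (J x) (J x) x) + α * T x (J x) z x := by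
              rw [hsub3, hs3]
          _ = _ := by ring
      rw [expand, hα, hβ]
      field_simp
  -- H = 0
  have hH : ∀ x : V, T x (J x) (J x) x = 0 := by
    intro x
    by_cases hx : x = 0
    · simp [hx, hz1]
    · have hrx : ⟪x,x⟫ ≠ 0 := fun h => hx (inner_self_eq_zero.mp h)
      set rx := ⟪x,x⟫ with hrxdef
      have hJxJx : ⟪J x, J x⟫ = rx := hJorth x x
      have s1 : ∑ i, ⟪J x, e i⟫ * T x (J x) (e i) x = T x (J x) (J x) x :=
        sumlin e (fun v => T x (J x) v x) (fun a b => ha3 x (J x) a b x)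
          (fun c a => hs3 c x (J x) a x) (J x)
      have s2 : ∑ i, ⟪J x, e i⟫ * ⟪J x, e i⟫ = rx := by
        have := sumlin e (fun v => ⟪J x, v⟫) (fun a b => inner_add_right _ _ _)
          (fun c a => real_inner_smul_right _ _ _) (J x)
        rw [this, hJxJx]
      have hcalc : (0:ℝ) = rx * T x (J x) (J x) x := by
        calc (0:ℝ) = rx^2 * ∑ i, T x (e i) (e i) x := by rw [hTric x x]; ring
          _ = ∑ i, rx^2 * T x (e i) (e i) x := Finset.mul_sum _ _ _
          _ = ∑ i, (2 * rx * (⟪J x, e i⟫ * T x (J x) (e i) x)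
                - (⟪J x, e i⟫ * ⟪J x, e i⟫) * T x (J x) (J x) x) := by
              refine Finset.sum_congr rfl (fun i _ => ?_)
              have := hZ4 x (e i) (e i)
              rw [this]; ring
          _ = 2 * rx * (∑ i, ⟪J x, e i⟫ * T x (J x) (e i) x)
                - (∑ i, ⟪J x, e i⟫ * ⟪J x, e i⟫) * T x (J x) (J x) x := by
              rw [Finset.sum_sub_distrib, Finset.mul_sum, Finset.sum_mul]
          _ = rx * T x (J x) (J x) x := by rw [s1, s2]; ring
      have := mul_eq_zero.mp hcalc.symm
      tauto
  -- F4
  have hF4 : ∀ x w y : V, ⟪J x, y⟫ = 0 → ⟪J w, y⟫ = 0 → T x y y w = 0 := by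
    intro x w y hx hw
    have h0 : T (x + w) y y (x + w) = 0 := by
      apply hT0; rw [map_add, inner_add_left, hx, hw]; ring
    rw [ha1, ha4, ha4] at h0
    have h1 := hT0 x y hx
    have h2 := hT0 w y hw
    have h3 : T w y y x = T x y y w := hout w y y x
    linarith
  -- LINK
  have hLINK : ∀ x y : V, ⟪J x, y⟫ = 0 →
      ⟪x,x⟫^2 * T x y y (J y) + ⟪x,x⟫ * ⟪y,y⟫ * T x (J x) y x = 0 := by
    intro x y hxy
    have hp1 : ⟪J y, x⟫ = 0 := by rw [hswap y x, hxy]; ring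
    have hp2 : ⟪x, J y⟫ = 0 := by rw [real_inner_comm]; exact hp1
    have hJyJy : ⟪J y, J y⟫ = ⟪y,y⟫ := hJorth y y
    have hg : ∀ t : ℝ,
        T (J x + t • y) ((t * ⟪y,y⟫) • x + ⟪x,x⟫ • J y)
          ((t * ⟪y,y⟫) • x + ⟪x,x⟫ • J y) (J x + t • y) = 0 := by
      intro t
      apply hT0
      have hJu : J (J x + t • y) = -x + t • J y := by
        rw [map_add, map_smul, hJ2]
      rw [hJu]
      simp only [inner_add_left, inner_add_right, real_inner_smul_left,
        real_inner_smul_right, inner_neg_left, hp2, hp1, hJyJy]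
      ring
    have e1 := hg 1
    have e2 := hg (-1)
    have e3 := hg 2
    have e4 := hg (-2)
    simp only [ha1, ha2, ha3, ha4, hs1, hs2, hs3, hs4] at e1 e2 e3 e4
    have hA : T y (J y) (J y) (J x) = T (J x) (J y) (J y) y := hout y (J y) (J y) (J x)
    have hB : T (J x) x (J y) (J x) = T (J x) (J y) x (J x) := hmid (J x) x (J y)
    have hC : T (J x) (J y) (J y) y = - T x y y (J y) := by
      have h := hTJ x y y (J y)
      rw [hJ2, hn4] at h
      linarith
    have hD : T (J x) x (J y) (J x) = - T x (J x) y x := by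
      have h := hTJ x (J x) y x
      rw [hJ2, hn2] at h
      linarith
    linear_combination (-1/3 : ℝ) * e1 + (1/3 : ℝ) * e2 + (1/24 : ℝ) * e3
      + (-1/24 : ℝ) * e4 + (⟪x,x⟫^2/2) * hA + (-(⟪x,x⟫*⟪y,y⟫)/2) * hB
      + ⟪x,x⟫^2 * hC + (⟪x,x⟫*⟪y,y⟫) * hD
  -- (C)
  have hC5 : ∀ x y w : V, ⟪x,x⟫ ≠ 0 → ⟪J x, y⟫ = 0 →
      ⟪x,x⟫ * T x y y w = -(⟪w, J y⟫ * T x (J x) y x) := by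
    intro x y w hrx hxy
    by_cases hy : y = 0
    · simp [hy, hz2, hz3, map_zero]
    · have hry : ⟪y,y⟫ ≠ 0 := fun h => hy (inner_self_eq_zero.mp h)
      have hJyJy : ⟪J y, J y⟫ = ⟪y,y⟫ := hJorth y y
      set c := ⟪w, J y⟫ / ⟪y,y⟫ with hc
      have hw1 : ⟪J y, w - c • J y⟫ = 0 := by
        rw [inner_sub_right, real_inner_smul_right, hJyJy, hc,
          real_inner_comm (J y) w]
        field_simp; ring
      have hw0 : ⟪J (w - c • J y), y⟫ = 0 := by
        rw [hswap, hw1]; ring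
      have h1 : T x y y (w - c • J y) = 0 := hF4 x (w - c • J y) y hxy hw0
      have hww : w = (w - c • J y) + c • J y := by abel
      have h2 : T x y y w = c * T x y y (J y) := by
        calc T x y y w = T x y y ((w - c • J y) + c • J y) := by rw [← hww]
          _ = c * T x y y (J y) := by rw [ha4, hs4, h1]; ring
      have h4 := hLINK x y hxy
      have h6 : ⟪x,x⟫ * (⟪x,x⟫ * T x y y (J y) + ⟪y,y⟫ * T x (J x) y x) = 0 := by
        linear_combination h4
      have h5 : ⟪x,x⟫ * T x y y (J y) + ⟪y,y⟫ * T x (J x) y x = 0 :=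
        (mul_eq_zero.mp h6).resolve_left hrx
      rw [h2, hc]
      field_simp
      linear_combination ⟪w, J y⟫ * h5
  -- the trace identity: kappa(x,w) = - lambda(x, Jw)
  have hkap : ∀ x w : V, ⟪x,x⟫ ≠ 0 →
      T x (J x) (J w) x + T x (J x) (J x) w = 0 := by
    intro x w hrx
    have hJxJx : ⟪J x, J x⟫ = ⟪x,x⟫ := hJorth x x
    set rx := ⟪x,x⟫ with hrxdef
    have key : ∀ v : V, rx * T x v v w =
        ⟪J w, v⟫ * T x (J x) v x
        - ⟪J x, v⟫ * ((⟪w,x⟫/rx) * T x (J x) v x)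
        + ⟪J x, v⟫ * T x (J x) v w
        + ⟪J x, v⟫ * T x v (J x) w
        - ⟪J x, v⟫ * (⟪J x, v⟫ * (T x (J x) (J x) w / rx)) := by
      intro v
      set c := ⟪J x, v⟫ / rx with hc
      have hyv : ⟪J x, v - c • J x⟫ = 0 := by
        rw [inner_sub_right, real_inner_smul_right, hJxJx, hc]
        field_simp; ring
      have he : v = (v - c • J x) + c • J x := by abel
      have h1 : rx * T x v v w
          = rx * T x (v - c • J x) (v - c • J x) w
            + (rx * c) * T x (J x) (v - c • J x) w
            + (rx * c) * T x (v - c • J x) (J x) w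
            + (rx * c * c) * T x (J x) (J x) w := by
        conv_lhs => rw [he]
        simp only [ha2, ha3, hs2, hs3]
        ring
      have hC := hC5 x (v - c • J x) w hrx hyv
      have h2 : T x (J x) (v - c • J x) w
          = T x (J x) v w - c * T x (J x) (J x) w := by
        rw [hsub3, hs3]
      have h3 : T x (v - c • J x) (J x) w
          = T x v (J x) w - c * T x (J x) (J x) w := by
        rw [hsub2, hs2]
      have h4 : T x (J x) (v - c • J x) x = T x (J x) v x := by
        rw [hsub3, hs3, hH]; ring
      have hyvJ : J (v - c • J x) = J v + c • x := by
        rw [map_sub, map_smul, hJ2]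
        simp [smul_neg, sub_neg_eq_add]
      have h5 : ⟪w, J (v - c • J x)⟫ = ⟪w, J v⟫ + c * ⟪w, x⟫ := by
        rw [hyvJ, inner_add_right, real_inner_smul_right]
      have h6 : ⟪w, J v⟫ = -⟪J w, v⟫ := by
        rw [real_inner_comm, hswap]
      have hC' : rx * T x (v - c • J x) (v - c • J x) w
          = -((- ⟪J w, v⟫ + c * ⟪w, x⟫) * T x (J x) v x) := by
        rw [hC, h5, h6, h4]
      rw [h1, hC', h2, h3, hc]
      field_simp
      ring
    have s1 : ∑ i, ⟪J w, e i⟫ * T x (J x) (e i) x = T x (J x) (J w) x :=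
      sumlin e (fun v => T x (J x) v x) (fun a b => ha3 x (J x) a b x)
        (fun c a => hs3 c x (J x) a x) (J w)
    have s2 : ∑ i, ⟪J x, e i⟫ * ((⟪w,x⟫/rx) * T x (J x) (e i) x)
        = (⟪w,x⟫/rx) * T x (J x) (J x) x :=
      sumlin e (fun v => (⟪w,x⟫/rx) * T x (J x) v x)
        (fun a b => by rw [ha3]; ring)
        (fun c a => by rw [hs3]; ring) (J x)
    have s3 : ∑ i, ⟪J x, e i⟫ * T x (J x) (e i) w = T x (J x) (J x) w :=
      sumlin e (fun v => T x (J x) v w) (fun a b => ha3 x (J x) a b w)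
        (fun c a => hs3 c x (J x) a w) (J x)
    have s4 : ∑ i, ⟪J x, e i⟫ * T x (e i) (J x) w = T x (J x) (J x) w :=
      sumlin e (fun v => T x v (J x) w) (fun a b => ha2 x a b (J x) w)
        (fun c a => hs2 c x a (J x) w) (J x)
    have s5 : ∑ i, ⟪J x, e i⟫ * (⟪J x, e i⟫ * (T x (J x) (J x) w / rx))
        = rx * (T x (J x) (J x) w / rx) := by
      have := sumlin e (fun v => ⟪J x, v⟫ * (T x (J x) (J x) w / rx))
        (fun a b => by rw [inner_add_right]; ring)
        (fun c a => by rw [real_inner_smul_right]; ring) (J x)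
      rw [this, hJxJx]
    have hsum : (0:ℝ) = T x (J x) (J w) x
        - (⟪w,x⟫/rx) * T x (J x) (J x) x
        + T x (J x) (J x) w + T x (J x) (J x) w
        - rx * (T x (J x) (J x) w / rx) := by
      calc (0:ℝ) = rx * ∑ i, T x (e i) (e i) w := by rw [hTric]; ring
        _ = ∑ i, rx * T x (e i) (e i) w := Finset.mul_sum _ _ _
        _ = ∑ i, (⟪J w, e i⟫ * T x (J x) (e i) x
            - ⟪J x, e i⟫ * ((⟪w,x⟫/rx) * T x (J x) (e i) x)
            + ⟪J x, e i⟫ * T x (J x) (e i) w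
            + ⟪J x, e i⟫ * T x (e i) (J x) w
            - ⟪J x, e i⟫ * (⟪J x, e i⟫ * (T x (J x) (J x) w / rx))) :=
          Finset.sum_congr rfl (fun i _ => key (e i))
        _ = _ := by
          simp only [Finset.sum_add_distrib, Finset.sum_sub_distrib]
          rw [s1, s2, s3, s4, s5]
    rw [hH] at hsum
    field_simp at hsum
    exact (mul_eq_zero.mp (show rx * (T x (J x) (J w) x + T x (J x) (J x) w) = 0 by linear_combination -hsum)).resolve_left hrx
  -- lambda = 0
  have hlam : ∀ x w : V, T x (J x) w x = 0 := by
    intro x w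
    by_cases hx : x = 0
    · simp [hx, hz1]
    · have hrx : ⟪x,x⟫ ≠ 0 := fun h => hx (inner_self_eq_zero.mp h)
      -- first for vectors of the form J w'
      have main : ∀ v : V, T x (J x) (J v) x = 0 := by
        intro v
        -- Bianchi at (x, Jx, v, Jx)
        have hb := hbia x (J x) v (J x)
        have hb1 : T v x (J x) (J x) = 0 := hd4 v x (J x)
        have hb2 : T (J x) v x (J x) = T x (J x) (J x) v := hsym3 (J x) v x (J x)
        -- so T x (Jx) v (Jx) = - T x (Jx) (Jx) v = T x (Jx) (Jv) x  (by hkap)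
        have hk := hkap x v hrx
        -- J-invariance: T x (Jx) (Jv) x = - T x (Jx) v (Jx)
        have hj : T x (J x) (J v) x = - T x (J x) v (J x) := by
          have h := hTJ x (J x) (J v) x
          rw [hJ2, hJ2, hn2, hn3] at h
          have h2 := hsym1 (J x) x v (J x)
          linarith
        linarith
      -- now general w
      have hw : w = J (- (J w)) := by rw [map_neg, hJ2, neg_neg]
      rw [hw]
      exact main (-(J w))
  -- T x y z x = 0
  have hTx : ∀ x y z : V, T x y z x = 0 := by
    intro x y z
    by_cases hx : x = 0
    · simp [hx, hz1]
    · have hrx : ⟪x,x⟫ ≠ 0 := fun h => hx (inner_self_eq_zero.mp h)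
      have h := hZ4 x y z
      rw [hlam, hlam, hlam] at h
      have : ⟪x,x⟫^2 * T x y z x = 0 := by rw [h]; ring
      have h2 := mul_eq_zero.mp this
      rcases h2 with h2 | h2
      · exact absurd h2 (pow_ne_zero 2 hrx)
      · exact h2
  -- outer antisymmetry
  have hoanti : ∀ x y z u : V, T x y z u = - T u y z x := by
    intro x y z u
    have h0 : T (x + u) y z (x + u) = 0 := hTx (x + u) y z
    rw [ha1, ha4, ha4] at h0
    have h1 := hTx x y z
    have h2 := hTx u y z
    linarith
  -- middle antisymmetry
  have hmanti : ∀ x y z u : V, T x y z u = - T x z y u := by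
    intro x y z u
    have h1 : T x y z u = - T z x u y := by
      rw [hoanti x y z u, hsym3 u y z x]
    have h2 : T z x u y = - T y x u z := hoanti z x u y
    have h3 : T y x u z = T u z y x := hsym3 y x u z
    have h4 : T u z y x = - T x z y u := hoanti u z y x
    rw [h1, h2, h3, h4]; ring
  -- finish
  intro x y z u
  have hb := hbia x y z u
  have e1 := hmanti y z x u
  have e2 := hsym1 x y z u
  have e3 := hmanti z x y u
  have e4 := hsym1 z y x u
  linarith

end auxZ

theorem stmt_1 {V : Type*} [NormedAddCommGroup V] [InnerProductSpace ℝ V]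
    [FiniteDimensional ℝ V] (n : ℕ) (hn : 2 ≤ n)
    (hdim : Module.finrank ℝ V = 2 * n)
    (J : V →ₗ[ℝ] V)
    (hJ2 : ∀ x : V, J (J x) = -x)
    (hJorth : ∀ x y : V, ⟪J x, J y⟫ = ⟪x, y⟫)
    (R : V →ₗ[ℝ] V →ₗ[ℝ] V →ₗ[ℝ] V →ₗ[ℝ] ℝ)
    (hR : IsCurvatureLike R)
    (hRJ : ∀ x y z u : V, R x y z u = R (J x) (J y) (J z) (J u))
    (e : OrthonormalBasis (Fin (2 * n)) ℝ V)
    -- the Ricci tensor of `R` with respect to the orthonormal basis `e`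
    (S : V → V → ℝ) (hS : ∀ x y : V, S x y = ∑ i, R x (e i) (e i) y)
    -- the tensors R₁, R₂ and ψ
    (R₁ : V → V → V → V → ℝ)
    (hR₁ : ∀ x y z u : V, R₁ x y z u = ⟪y, z⟫ * ⟪x, u⟫ - ⟪x, z⟫ * ⟪y, u⟫)
    (R₂ : V → V → V → V → ℝ)
    (hR₂ : ∀ x y z u : V, R₂ x y z u =
      ⟪J y, z⟫ * ⟪J x, u⟫ - ⟪J x, z⟫ * ⟪J y, u⟫ - 2 * ⟪J x, y⟫ * ⟪J z, u⟫)
    (ψ : V → V → V → V → ℝ)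
    (hψ : ∀ x y z u : V, ψ x y z u =
      ⟪J y, z⟫ * S (J x) u - ⟪J x, z⟫ * S (J y) u - 2 * ⟪J x, y⟫ * S (J z) u
      + ⟪J x, u⟫ * S (J y) z - ⟪J y, u⟫ * S (J x) z - 2 * ⟪J z, u⟫ * S (J x) y)
    -- `R` has constant antiholomorphic sectional curvature ν
    (ν : ℝ)
    (hν : ∀ x y : V, ‖x‖ = 1 → ‖y‖ = 1 → ⟪x, y⟫ = 0 → ⟪y, J x⟫ = 0 →
      R x y y x = ν) :
    ∀ x y z u : V, R x y z u =
      (1 / 6) * ψ x y z u + ν * R₁ x y z u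
        - ((2 * (n : ℝ) - 1) / 3) * ν * R₂ x y z u := by
  obtain ⟨hR1', hR2', hR3', hR4'⟩ := hR
  have hswap : ∀ a b : V, ⟪J a, b⟫ = -⟪J b, a⟫ := by
    intro a b
    have h1 : ⟪J a, b⟫ = ⟪J (J a), J b⟫ := (hJorth _ _).symm
    rw [hJ2] at h1
    rw [h1, inner_neg_left, real_inner_comm]
  have hJaa : ∀ a : V, ⟪J a, a⟫ = 0 := fun a => by
    have := hswap a a; linarith
  -- R linearity helpers
  have Ra1 : ∀ a b y z u : V, R (a + b) y z u = R a y z u + R b y z u := by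
    intro a b y z u; simp [map_add]
  have Rs1 : ∀ (c : ℝ) (a y z u : V), R (c • a) y z u = c * R a y z u := by
    intro c a y z u; simp [map_smul]
  have Ra2 : ∀ x a b z u : V, R x (a + b) z u = R x a z u + R x b z u := by
    intro x a b y z; simp [map_add]
  have Rs2 : ∀ (c : ℝ) (x a z u : V), R x (c • a) z u = c * R x a z u := by
    intro c x a z u; simp [map_smul]
  have Ra3 : ∀ x y a b u : V, R x y (a + b) u = R x y a u + R x y b u := by
    intro x y a b u; simp [map_add]
  have Rs3 : ∀ (c : ℝ) (x y a u : V), R x y (c • a) u = c * R x y a u := by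
    intro c x y a u; simp [map_smul]
  have Ra4 : ∀ x y z a b : V, R x y z (a + b) = R x y z a + R x y z b := by
    intro x y z a b; simp [map_add]
  have Rs4 : ∀ (c : ℝ) (x y z a : V), R x y z (c • a) = c * R x y z a := by
    intro c x y z a; simp [map_smul]
  have Rxxz : ∀ a z u : V, R a a z u = 0 := fun a z u => by
    have := hR1' a a z u; linarith
  have Rzuu : ∀ a b c : V, R a b c c = 0 := fun a b c => by
    have := hR2' a b c c; linarith
  -- key0 : value of R x y y x for antiholomorphic pairs
  have key0 : ∀ x y : V, ⟪J x, y⟫ = 0 →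
      R x y y x = ν * (⟪x,x⟫ * ⟪y,y⟫ - ⟪x,y⟫^2) := by
    intro x y hxy
    by_cases hx : x = 0
    · simp [hx]
    · have hrx : ⟪x,x⟫ ≠ 0 := fun h => hx (inner_self_eq_zero.mp h)
      set c := ⟪x,y⟫ / ⟪x,x⟫ with hc
      have hcx : c * ⟪x,x⟫ = ⟪x,y⟫ := by rw [hc]; field_simp
      by_cases hy' : y - c • x = 0
      · -- y = c • x
        have hy : y = c • x := by
          have h := sub_eq_zero.mp hy'; exact h
        rw [hy]
        rw [Rs2, Rs3, Rxxz, real_inner_smul_right, real_inner_smul_left,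
          real_inner_smul_right]
        ring
      · have hxy0 : ⟪x, y - c • x⟫ = 0 := by
          rw [inner_sub_right, real_inner_smul_right]
          linarith [hcx]
        have hJxy0 : ⟪J x, y - c • x⟫ = 0 := by
          rw [inner_sub_right, real_inner_smul_right, hxy, hJaa]
          ring
        have hnx : ‖x‖ ≠ 0 := norm_ne_zero_iff.mpr hx
        have hny : ‖y - c • x‖ ≠ 0 := norm_ne_zero_iff.mpr hy'
        have h1 : ‖‖x‖⁻¹ • x‖ = 1 := by
          rw [norm_smul, norm_inv, norm_norm]; field_simp
        have h2 : ‖‖y - c • x‖⁻¹ • (y - c • x)‖ = 1 := by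
          rw [norm_smul, norm_inv, norm_norm]; field_simp
        have h3 : ⟪‖x‖⁻¹ • x, ‖y - c • x‖⁻¹ • (y - c • x)⟫ = 0 := by
          rw [real_inner_smul_left, real_inner_smul_right, hxy0]; ring
        have h4 : ⟪‖y - c • x‖⁻¹ • (y - c • x), J (‖x‖⁻¹ • x)⟫ = 0 := by
          rw [map_smul, real_inner_smul_left, real_inner_smul_right,
            real_inner_comm, hJxy0]
          ring
        have hu := hν _ _ h1 h2 h3 h4
        rw [Rs1, Rs2, Rs3, Rs4] at hu
        have hxx : ⟪x,x⟫ = ‖x‖^2 := real_inner_self_eq_norm_sq x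
        have hyys : ⟪y - c • x, y - c • x⟫ = ‖y - c • x‖^2 :=
          real_inner_self_eq_norm_sq _
        have hyy : ⟪y - c • x, y - c • x⟫
            = ⟪y,y⟫ - 2*c*⟪x,y⟫ + c^2*⟪x,x⟫ := by
          rw [inner_sub_left, inner_sub_right, inner_sub_right,
            real_inner_smul_left, real_inner_smul_right, real_inner_smul_left,
            real_inner_smul_right, real_inner_comm y x]
          ring
        field_simp at hu
        simp only [map_sub, map_smul, LinearMap.sub_apply, LinearMap.smul_apply, smul_eq_mul, Rzuu, Rxxz] at hu
        linear_combination hu + (-ν*‖y - c • x‖^2) * hxx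
          + (-ν*⟪x,x⟫) * hyys + (ν*⟪x,x⟫) * hyy
          + (ν*(c*⟪x,x⟫ - ⟪x,y⟫)) * hcx
  have Rn2 : ∀ x a z u : V, R x (-a) z u = - R x a z u := by
    intro x a z u; simp [map_neg]
  have Rn3 : ∀ x y a u : V, R x y (-a) u = - R x y a u := by
    intro x y a u; simp [map_neg]
  -- S facts
  have hSa1 : ∀ a b y : V, S (a + b) y = S a y + S b y := by
    intro a b y; simp [hS, Ra1, Finset.sum_add_distrib]
  have hSs1 : ∀ (c : ℝ) (a y : V), S (c • a) y = c * S a y := by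
    intro c a y; simp [hS, Rs1, Finset.mul_sum]
  have hSa2 : ∀ a b y : V, S y (a + b) = S y a + S y b := by
    intro a b y; simp [hS, Ra4, Finset.sum_add_distrib]
  have hSs2 : ∀ (c : ℝ) (a y : V), S y (c • a) = c * S y a := by
    intro c a y; simp [hS, Rs4, Finset.mul_sum]
  have hSsym : ∀ a b : V, S a b = S b a := by
    intro a b
    rw [hS, hS]
    refine Finset.sum_congr rfl (fun i _ => ?_)
    have h1 := hR3' a (e i) (e i) b
    have h2 := hR1' (e i) b a (e i)
    have h3 := hR2' b (e i) a (e i)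
    linarith
  have hShyb : ∀ a b : V, S (J a) (J b) = S a b := by
    intro a b
    have stepA : ∀ i, R (J a) (e i) (e i) (J b) = R a (J (e i)) (J (e i)) b := by
      intro i
      have h := hRJ a (J (e i)) (J (e i)) b
      rw [hJ2, Rn2, Rn3] at h
      linarith
    have stepB : ∀ i, R a (J (e i)) (J (e i)) b
        = ∑ j, ⟪J (e i), e j⟫ * R a (e j) (J (e i)) b :=
      fun i => (sumlin e (fun v => R a v (J (e i)) b)
        (fun p q => Ra2 a p q (J (e i)) b)
        (fun c p => Rs2 c a p (J (e i)) b) (J (e i))).symm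
    have stepD : ∀ j, ∑ i, ⟪J (e i), e j⟫ * R a (e j) (J (e i)) b
        = R a (e j) (e j) b := by
      intro j
      have hper : ∀ i, ⟪J (e i), e j⟫ * R a (e j) (J (e i)) b
          = ⟪J (e j), e i⟫ * (- R a (e j) (J (e i)) b) := by
        intro i; rw [hswap]; ring
      rw [Finset.sum_congr rfl (fun i _ => hper i)]
      have := sumlin e (fun v => - R a (e j) (J v) b)
        (fun p q => by rw [map_add, Ra3]; ring)
        (fun c p => by rw [map_smul, Rs3]; ring) (J (e j))
      rw [this]
      have hz : - R a (e j) (J (J (e j))) b = R a (e j) (e j) b := by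
        rw [hJ2, Rn3]; ring
      exact hz
    calc S (J a) (J b) = ∑ i, R (J a) (e i) (e i) (J b) := hS _ _
      _ = ∑ i, ∑ j, ⟪J (e i), e j⟫ * R a (e j) (J (e i)) b := by
          refine Finset.sum_congr rfl (fun i _ => ?_)
          rw [stepA i, stepB i]
      _ = ∑ j, ∑ i, ⟪J (e i), e j⟫ * R a (e j) (J (e i)) b := Finset.sum_comm
      _ = ∑ j, R a (e j) (e j) b := Finset.sum_congr rfl (fun j _ => stepD j)
      _ = S a b := (hS a b).symm
  -- sigma: the Ricci tensor of the "reduced" tensor Q = R - nu R1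
  set σ : V → V → ℝ := fun a b => S a b - (2*(n:ℝ)-1) * ν * ⟪a,b⟫ with hσ
  have hσa1 : ∀ a b y : V, σ (a + b) y = σ a y + σ b y := by
    intro a b y; simp only [hσ]; rw [hSa1, inner_add_left]; ring
  have hσs1 : ∀ (c : ℝ) (a y : V), σ (c • a) y = c * σ a y := by
    intro c a y; simp only [hσ]; rw [hSs1, real_inner_smul_left]; ring
  have hσa2 : ∀ (y a b : V), σ y (a + b) = σ y a + σ y b := by
    intro y a b; simp only [hσ]; rw [hSa2, inner_add_right]; ring
  have hσs2 : ∀ (c : ℝ) (y a : V), σ y (c • a) = c * σ y a := by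
    intro c y a; simp only [hσ]; rw [hSs2, real_inner_smul_right]; ring
  have hσsym : ∀ a b : V, σ a b = σ b a := by
    intro a b; simp only [hσ]; rw [hSsym, real_inner_comm]
  have hσhyb : ∀ a b : V, σ (J a) (J b) = σ a b := by
    intro a b; simp only [hσ]; rw [hShyb, hJorth]
  have hσn2 : ∀ a b : V, σ a (-b) = - σ a b := by
    intro a b
    have := hσs2 (-1) a b
    rw [neg_one_smul] at this
    rw [this]; ring
  have hA : ∀ a b : V, σ (J a) b = -(σ (J b) a) := by
    intro a b
    have h1 : σ (J a) b = σ b (J a) := hσsym _ _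
    have h2 : σ b (J a) = σ (J b) (J (J a)) := (hσhyb b (J a)).symm
    rw [h1, h2, hJ2, hσn2]
  have hσJaa : ∀ a : V, σ (J a) a = 0 := fun a => by
    have := hA a a; linarith
  -- the tensor T := R - nu*R1 - (1/6) psi_sigma ; we show T = 0 via lemZ
  set T : V → V → V → V → ℝ := fun x y z u =>
    R x y z u - ν * (⟪y,z⟫ * ⟪x,u⟫ - ⟪x,z⟫ * ⟪y,u⟫)
      - (1/6) * (⟪J y, z⟫ * σ (J x) u - ⟪J x, z⟫ * σ (J y) u
          - 2 * ⟪J x, y⟫ * σ (J z) u + ⟪J x, u⟫ * σ (J y) z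
          - ⟪J y, u⟫ * σ (J x) z - 2 * ⟪J z, u⟫ * σ (J x) y) with hT
  have ha1 : ∀ a b y z u : V, T (a + b) y z u = T a y z u + T b y z u := by
    intro a b y z u
    simp only [hT, map_add, LinearMap.add_apply, Ra1, inner_add_left, inner_add_right, hσa1, hσa2]
    ring
  have hs1 : ∀ (c : ℝ) (a y z u : V), T (c • a) y z u = c * T a y z u := by
    intro c a y z u
    simp only [hT, map_smul, LinearMap.smul_apply, smul_eq_mul, Rs1, real_inner_smul_left, real_inner_smul_right,
      hσs1, hσs2]
    ring
  have ha2 : ∀ x a b z u : V, T x (a + b) z u = T x a z u + T x b z u := by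
    intro x a b z u
    simp only [hT, map_add, LinearMap.add_apply, Ra2, inner_add_left, inner_add_right, hσa1, hσa2]
    ring
  have hs2 : ∀ (c : ℝ) (x a z u : V), T x (c • a) z u = c * T x a z u := by
    intro c x a z u
    simp only [hT, map_smul, LinearMap.smul_apply, smul_eq_mul, Rs2, real_inner_smul_left, real_inner_smul_right,
      hσs1, hσs2]
    ring
  have ha3 : ∀ x y a b u : V, T x y (a + b) u = T x y a u + T x y b u := by
    intro x y a b u
    simp only [hT, map_add, LinearMap.add_apply, Ra3, inner_add_left, inner_add_right, hσa1, hσa2]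
    ring
  have hs3 : ∀ (c : ℝ) (x y a u : V), T x y (c • a) u = c * T x y a u := by
    intro c x y a u
    simp only [hT, map_smul, LinearMap.smul_apply, smul_eq_mul, Rs3, real_inner_smul_left, real_inner_smul_right,
      hσs1, hσs2]
    ring
  have ha4 : ∀ x y z a b : V, T x y z (a + b) = T x y z a + T x y z b := by
    intro x y z a b
    simp only [hT, map_add, LinearMap.add_apply, Ra4, inner_add_left, inner_add_right, hσa1, hσa2]
    ring
  have hs4 : ∀ (c : ℝ) (x y z a : V), T x y z (c • a) = c * T x y z a := by
    intro c x y z a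
    simp only [hT, map_smul, LinearMap.smul_apply, smul_eq_mul, Rs4, real_inner_smul_left, real_inner_smul_right,
      hσs1, hσs2]
    ring
  have hsym1 : ∀ x y z u : V, T x y z u = - T y x z u := by
    intro x y z u
    simp only [hT]
    linear_combination (hR1' x y z u) + (1/3) * σ (J z) u * (hswap x y)
      + (1/3) * ⟪J z, u⟫ * (hA x y)
  have hsym2 : ∀ x y z u : V, T x y z u = - T x y u z := by
    intro x y z u
    simp only [hT]
    linear_combination (hR2' x y z u) + (1/3) * ⟪J x, y⟫ * (hA z u)
      + (1/3) * σ (J x) y * (hswap z u)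
  have hsym3 : ∀ x y z u : V, T x y z u = T z u x y := by
    intro x y z u
    simp only [hT]
    linear_combination (hR3' x y z u)
      + ν*⟪y,z⟫*(real_inner_comm x u) + ν*⟪u,x⟫*(real_inner_comm y z)
      - ν*⟪y,u⟫*(real_inner_comm x z) - ν*⟪z,x⟫*(real_inner_comm y u)
      - (1/6) * (σ (J x) u * (hswap z y) - ⟪J z, y⟫ * (hA u x)
        - σ (J y) u * (hswap z x) + ⟪J z, x⟫ * (hA u y)
        + σ (J y) z * (hswap u x) - ⟪J u, x⟫ * (hA z y)
        - σ (J x) z * (hswap u y) + ⟪J u, y⟫ * (hA z x))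
  have hbia : ∀ x y z u : V, T x y z u + T y z x u + T z x y u = 0 := by
    intro x y z u
    simp only [hT]
    linear_combination (hR4' x y z u)
      + ν*⟪x,u⟫*(real_inner_comm y z) + ν*⟪y,u⟫*(real_inner_comm z x)
      + ν*⟪z,u⟫*(real_inner_comm x y)
      + (1/6) * (σ (J x) u * (hswap z y) + σ (J y) u * (hswap z x)
        + σ (J z) u * (hswap y x) + ⟪J x, u⟫ * (hA z y)
        + ⟪J y, u⟫ * (hA z x) + ⟪J z, u⟫ * (hA y x))
  have hTJ : ∀ x y z u : V, T x y z u = T (J x) (J y) (J z) (J u) := by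
    intro x y z u
    simp only [hT]
    rw [← hRJ x y z u]
    simp only [hJorth, hσhyb]
  -- Ricci of T vanishes
  have hTric : ∀ x w : V, ∑ i, T x (e i) (e i) w = 0 := by
    intro x w
    have hB : ∑ i, (⟪e i, e i⟫*⟪x,w⟫ - ⟪x,e i⟫*⟪e i,w⟫)
        = (2*(n:ℝ))*⟪x,w⟫ - ⟪x,w⟫ := by
      rw [Finset.sum_sub_distrib]
      have hone : ∀ i, ⟪e i, e i⟫ = (1:ℝ) := fun i => by
        have hni := e.orthonormal.1 i
        rw [real_inner_self_eq_norm_sq, hni]; norm_num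
      have b1 : ∑ i : Fin (2*n), ⟪e i, e i⟫*⟪x,w⟫ = (2*(n:ℝ))*⟪x,w⟫ := by
        simp only [hone, one_mul, Finset.sum_const, Finset.card_univ,
          Fintype.card_fin, nsmul_eq_mul]
        push_cast; ring
      have b2 : ∑ i, ⟪x,e i⟫*⟪e i,w⟫ = ⟪x,w⟫ :=
        sumlin e (fun v => ⟪v,w⟫) (fun a b => inner_add_left _ _ _)
          (fun c a => real_inner_smul_left _ _ _) x
      rw [b1, b2]
    have hC : ∑ i, (⟪J (e i), e i⟫ * σ (J x) w - ⟪J x, e i⟫ * σ (J (e i)) w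
        - 2 * ⟪J x, e i⟫ * σ (J (e i)) w + ⟪J x, w⟫ * σ (J (e i)) (e i)
        - ⟪J (e i), w⟫ * σ (J x) (e i) - 2 * ⟪J (e i), w⟫ * σ (J x) (e i))
        = 6 * σ x w := by
      have hper : ∀ i, (⟪J (e i), e i⟫ * σ (J x) w - ⟪J x, e i⟫ * σ (J (e i)) w
          - 2 * ⟪J x, e i⟫ * σ (J (e i)) w + ⟪J x, w⟫ * σ (J (e i)) (e i)
          - ⟪J (e i), w⟫ * σ (J x) (e i) - 2 * ⟪J (e i), w⟫ * σ (J x) (e i))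
          = -3 * (⟪J x, e i⟫ * σ (J (e i)) w)
            + 3 * (⟪J w, e i⟫ * σ (J x) (e i)) := by
        intro i
        rw [hJaa, hσJaa, hswap (e i) w]
        ring
      rw [Finset.sum_congr rfl (fun i _ => hper i), Finset.sum_add_distrib,
        ← Finset.mul_sum, ← Finset.mul_sum]
      have c1 : ∑ i, ⟪J x, e i⟫ * σ (J (e i)) w = - σ x w := by
        have hs := sumlin e (fun v => σ (J v) w)
          (fun a b => by rw [map_add, hσa1])
          (fun c a => by rw [map_smul, hσs1]) (J x)
        rw [hs]
        have h2 : σ (J (J x)) w = σ (-x) w := by rw [hJ2]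
        rw [h2]
        have h3 := hσs1 (-1) x w
        rw [neg_one_smul] at h3
        rw [h3]; ring
      have c2 : ∑ i, ⟪J w, e i⟫ * σ (J x) (e i) = σ x w := by
        have hs := sumlin e (fun v => σ (J x) v)
          (fun a b => hσa2 (J x) a b)
          (fun c a => hσs2 c (J x) a) (J w)
        rw [hs, hσhyb]
      rw [c1, c2]; ring
    calc ∑ i, T x (e i) (e i) w
        = ∑ i, (R x (e i) (e i) w
            - ν * (⟪e i, e i⟫*⟪x,w⟫ - ⟪x,e i⟫*⟪e i,w⟫)
            - (1/6) * (⟪J (e i), e i⟫ * σ (J x) w - ⟪J x, e i⟫ * σ (J (e i)) w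
              - 2 * ⟪J x, e i⟫ * σ (J (e i)) w + ⟪J x, w⟫ * σ (J (e i)) (e i)
              - ⟪J (e i), w⟫ * σ (J x) (e i)
              - 2 * ⟪J (e i), w⟫ * σ (J x) (e i))) := by
          refine Finset.sum_congr rfl (fun i _ => ?_)
          simp only [hT]
      _ = (∑ i, R x (e i) (e i) w)
            - ν * (∑ i, (⟪e i, e i⟫*⟪x,w⟫ - ⟪x,e i⟫*⟪e i,w⟫))
            - (1/6) * (∑ i, (⟪J (e i), e i⟫ * σ (J x) w
              - ⟪J x, e i⟫ * σ (J (e i)) w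
              - 2 * ⟪J x, e i⟫ * σ (J (e i)) w + ⟪J x, w⟫ * σ (J (e i)) (e i)
              - ⟪J (e i), w⟫ * σ (J x) (e i)
              - 2 * ⟪J (e i), w⟫ * σ (J x) (e i))) := by
          rw [Finset.sum_sub_distrib, Finset.sum_sub_distrib,
            Finset.mul_sum, Finset.mul_sum]
      _ = 0 := by
          rw [← hS, hB, hC]
          simp only [hσ]
          ring
  -- T has vanishing antiholomorphic sectional curvature
  have hT0 : ∀ x y : V, ⟪J x, y⟫ = 0 → T x y y x = 0 := by
    intro x y hxy
    have k := key0 x y hxy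
    have z1 : ⟪J y, y⟫ = 0 := hJaa y
    have z2 : ⟪J x, x⟫ = 0 := hJaa x
    have z3 : ⟪J y, x⟫ = 0 := by rw [hswap, hxy]; ring
    simp only [hT]
    rw [hxy, z1, z2, z3]
    linear_combination k - ν*⟪x,y⟫*(real_inner_comm y x)
  -- apply lemZ
  have hfinal := lemZ e J hJ2 hJorth T ha1 hs1 ha2 hs2 ha3 hs3 ha4 hs4
    hsym1 hsym2 hsym3 hbia hTJ hTric hT0
  intro x y z u
  have h := hfinal x y z u
  simp only [hT, hσ] at h
  rw [hψ, hR₁, hR₂]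
  linear_combination h
end

section
/- Let V be a real inner product space of dimension 2n (n ≥ 2) with an orthogonal complex structure J, and let R be a curvature-like tensor on V satisfying R(x,y,z,u) = R(Jx,Jy,Jz,Ju) for all x, y, z, u. If R has constant antiholomorphic sectional curvature ν, then (n+1)S(x,y) − 3S'(x,y) = (((n+1)τ − 3τ')/(2n)) ⟨x,y⟩ for all x, y ∈ V. -/
open scoped RealInnerProductSpace

namespace Stmt2Aux

section
variable {V : Type*} [NormedAddCommGroup V] [InnerProductSpace ℝ V]

lemma R_sub1 (R : V →ₗ[ℝ] V →ₗ[ℝ] V →ₗ[ℝ] V →ₗ[ℝ] ℝ) (a b z w u : V) :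
    R (a - b) z w u = R a z w u - R b z w u := by
  have h : R a = R (a - b) + R b := by rw [← map_add, sub_add_cancel]
  rw [h]; simp only [LinearMap.add_apply]; ring

lemma R_neg1 (R : V →ₗ[ℝ] V →ₗ[ℝ] V →ₗ[ℝ] V →ₗ[ℝ] ℝ) (a z w u : V) :
    R (-a) z w u = - R a z w u := by
  have h : R 0 = R (-a) + R a := by rw [← map_add, neg_add_cancel]
  rw [map_zero] at h
  have := congrArg (fun f => f z w u) h
  simp only [LinearMap.add_apply, LinearMap.zero_apply] at this
  linarith

-- basic: evaluation of linear functional versus ON basis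
lemma sum_lin {ι : Type*} [Fintype ι] (e : OrthonormalBasis ι ℝ V)
    (f : V →ₗ[ℝ] ℝ) (v : V) : ∑ i, ⟪e i, v⟫ * f (e i) = f v := by
  conv_rhs => rw [← e.sum_repr v, map_sum]
  exact Finset.sum_congr rfl fun i _ => by
    rw [map_smul, e.repr_apply_apply, smul_eq_mul]

lemma sum_lin2 {ι : Type*} [Fintype ι] (e : OrthonormalBasis ι ℝ V)
    (R : V →ₗ[ℝ] V →ₗ[ℝ] V →ₗ[ℝ] V →ₗ[ℝ] ℝ) (x u v w : V) :
    ∑ i, ⟪e i, w⟫ * R x (e i) u v = R x w u v :=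
  sum_lin e ((LinearMap.applyₗ v).comp ((LinearMap.applyₗ u).comp (R x))) w

lemma sum_lin1 {ι : Type*} [Fintype ι] (e : OrthonormalBasis ι ℝ V)
    (R : V →ₗ[ℝ] V →ₗ[ℝ] V →ₗ[ℝ] V →ₗ[ℝ] ℝ) (u v z w : V) :
    ∑ i, ⟪e i, w⟫ * R (e i) u v z = R w u v z :=
  sum_lin e ((LinearMap.applyₗ z).comp ((LinearMap.applyₗ v).comp
    ((LinearMap.applyₗ u).comp R))) w

lemma sum_lin4 {ι : Type*} [Fintype ι] (e : OrthonormalBasis ι ℝ V)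
    (R : V →ₗ[ℝ] V →ₗ[ℝ] V →ₗ[ℝ] V →ₗ[ℝ] ℝ) (x u v w : V) :
    ∑ i, ⟪e i, w⟫ * R x u v (e i) = R x u v w :=
  sum_lin e (R x u v) w

lemma sum_lin3J {ι : Type*} [Fintype ι] (e : OrthonormalBasis ι ℝ V)
    (R : V →ₗ[ℝ] V →ₗ[ℝ] V →ₗ[ℝ] V →ₗ[ℝ] ℝ) (J : V →ₗ[ℝ] V) (x u z w : V) :
    ∑ i, ⟪e i, w⟫ * R x u (J (e i)) z = R x u (J w) z :=
  sum_lin e (((LinearMap.applyₗ z).comp (R x u)).comp J) w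


variable (J : V →ₗ[ℝ] V) (R : V →ₗ[ℝ] V →ₗ[ℝ] V →ₗ[ℝ] V →ₗ[ℝ] ℝ)

lemma iJ (hJ2 : ∀ x : V, J (J x) = -x) (hJorth : ∀ x y : V, ⟪J x, J y⟫ = ⟪x, y⟫)
    (x y : V) : ⟪x, J y⟫ = -⟪J x, y⟫ := by
  calc ⟪x, J y⟫ = ⟪J x, J (J y)⟫ := (hJorth _ _).symm
  _ = ⟪J x, -y⟫ := by rw [hJ2]
  _ = -⟪J x, y⟫ := inner_neg_right _ _

lemma iJself (hJ2 : ∀ x : V, J (J x) = -x) (hJorth : ∀ x y : V, ⟪J x, J y⟫ = ⟪x, y⟫)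
    (x : V) : ⟪x, J x⟫ = 0 := by
  have h := iJ J hJ2 hJorth x x
  rw [real_inner_comm (J x) x] at h
  rw [real_inner_comm]
  linarith

-- scaled form of the constant antiholomorphic curvature hypothesis
lemma scaled (hJ2 : ∀ x : V, J (J x) = -x) (ν : ℝ)
    (hν : ∀ x y : V, ‖x‖ = 1 → ‖y‖ = 1 → ⟪x, y⟫ = 0 → ⟪y, J x⟫ = 0 →
      R x y y x = ν) :
    ∀ u v : V, ⟪u, v⟫ = 0 → ⟪v, J u⟫ = 0 →
      R u v v u = ν * (⟪u, u⟫ * ⟪v, v⟫) := by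
  intro u v h1 h2
  rcases eq_or_ne u 0 with rfl | hu
  · simp
  rcases eq_or_ne v 0 with rfl | hv
  · simp
  have hun : ‖u‖ ≠ 0 := norm_ne_zero_iff.2 hu
  have hvn : ‖v‖ ≠ 0 := norm_ne_zero_iff.2 hv
  have h := hν (‖u‖⁻¹ • u) (‖v‖⁻¹ • v) (norm_smul_inv_norm hu) (norm_smul_inv_norm hv)
    (by rw [real_inner_smul_left, real_inner_smul_right, h1]; ring)
    (by rw [map_smul, real_inner_smul_left, real_inner_smul_right, h2]; ring)
  simp only [map_smul, LinearMap.smul_apply, smul_eq_mul] at h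
  rw [real_inner_self_eq_norm_sq, real_inner_self_eq_norm_sq]
  field_simp at h
  linarith [h]


lemma z1 (hR : IsCurvatureLike R) (a b c : V) : R a a b c = 0 := by
  have := hR.1 a a b c; linarith

lemma z2 (hR : IsCurvatureLike R) (a b c : V) : R a b c c = 0 := by
  have := hR.2.1 a b c c; linarith

lemma sw23 (hR : IsCurvatureLike R) (a u v : V) : R a u v a = R a v u a := by
  have p := hR.2.2.1 a u v a
  have q := hR.1 v a a u
  have r := hR.2.1 a v a u
  have s := hR.2.2.1 a v a u
  -- R a u v a = R v a a u = -R a v a u = R a v u a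
  linarith [hR.2.1 a v u a, hR.2.2.1 v a a u]

lemma bmix (hR : IsCurvatureLike R) (a w : V) : R a (J a) w a = R a w (J a) a := by
  have b := hR.2.2.2 a (J a) w a
  have h2 := z2 R hR (J a) w a
  have h3 := hR.1 w a (J a) a
  linarith

lemma jmix (hR : IsCurvatureLike R) (hRJ : ∀ x y z u : V, R x y z u = R (J x) (J y) (J z) (J u))
    (hJ2 : ∀ x : V, J (J x) = -x) (a w : V) :
    R a (J a) (J w) (J a) = R a w (J a) a := by
  have h := hRJ a (J a) w a
  rw [hJ2] at h
  simp only [map_neg, LinearMap.neg_apply] at h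
  have h1 := hR.1 (J a) a (J w) (J a)
  have h2 := bmix J R hR a w
  linarith

lemma p1 (hR : IsCurvatureLike R) (a w : V) : R a w a (J a) = - R a w (J a) a := by
  have h := hR.2.2.1 a w a (J a)
  have h2 := hR.2.1 a (J a) a w
  have h3 := bmix J R hR a w
  have h4 := hR.2.2.1 a (J a) w a
  -- R a w a (Ja) = R a (Ja) a w = -R a (Ja) w a = -R a w (Ja) a
  linarith

set_option maxHeartbeats 2000000 in
lemma local_rel (hR : IsCurvatureLike R)
    (hRJ : ∀ x y z u : V, R x y z u = R (J x) (J y) (J z) (J u))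
    (hJ2 : ∀ x : V, J (J x) = -x) (hJorth : ∀ x y : V, ⟪J x, J y⟫ = ⟪x, y⟫)
    (ν : ℝ)
    (hν' : ∀ u v : V, ⟪u, v⟫ = 0 → ⟪v, J u⟫ = 0 →
      R u v v u = ν * (⟪u, u⟫ * ⟪v, v⟫))
    (x y : V) (hx : ⟪x,x⟫ = 1) (hy : ⟪y,y⟫ = 1) (hxy : ⟪x,y⟫ = 0)
    (hJxy : ⟪J x, y⟫ = 0) :
    6 * R x y (J y) (J x) = R x (J x) (J x) x + R y (J y) (J y) y - 2 * ν := by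
  have iJ' : ∀ u v : V, ⟪u, J v⟫ = -⟪J u, v⟫ := fun u v => by
    calc ⟪u, J v⟫ = ⟪J u, J (J v)⟫ := (hJorth _ _).symm
    _ = ⟪J u, -v⟫ := by rw [hJ2]
    _ = -⟪J u, v⟫ := inner_neg_right _ _
  -- inner product facts
  have i5 : ⟪x, J x⟫ = 0 := by
    have h := iJ' x x; have h2 : ⟪x, J x⟫ = ⟪J x, x⟫ := real_inner_comm _ _; linarith
  have i6 : ⟪y, J y⟫ = 0 := by
    have h := iJ' y y; have h2 : ⟪y, J y⟫ = ⟪J y, y⟫ := real_inner_comm _ _; linarith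
  have i1 : ⟪x, J y⟫ = 0 := by rw [iJ', hJxy]; ring
  have i2 : ⟪J x, J y⟫ = 0 := by rw [hJorth, hxy]
  have i3 : ⟪J x, J x⟫ = 1 := by rw [hJorth, hx]
  have i4 : ⟪J y, J y⟫ = 1 := by rw [hJorth, hy]
  have i7 : ⟪y, x⟫ = 0 := by rw [real_inner_comm, hxy]
  have i8 : ⟪y, J x⟫ = 0 := by rw [real_inner_comm, hJxy]
  have i9 : ⟪J y, x⟫ = 0 := by rw [real_inner_comm, i1]
  have i10 : ⟪J y, J x⟫ = 0 := by rw [real_inner_comm, i2]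
  have i11 : ⟪J x, x⟫ = 0 := by rw [real_inner_comm, i5]
  have i12 : ⟪J y, y⟫ = 0 := by rw [real_inner_comm, i6]
  -- the 8 instances of the curvature hypothesis
  have h1 := hν' x y hxy i8
  rw [hx, hy] at h1
  have h2 : R x (J y) (J y) x = ν := by
    have := hν' x (J y) i1 (by rw [real_inner_comm, i2])
    rw [hx, i4] at this; linarith [this]
  have c5a : ⟪x + J y, J x + y⟫ = 0 := by
    simp only [inner_add_left, inner_add_right, inner_sub_left, inner_sub_right, inner_neg_right, hx, hy, hxy, hJxy, i1, i2, i3, i4, i5, i6, i7, i8, i9, i10, i11, i12]; ring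
  have c5b : ⟪J x + y, J (x + J y)⟫ = 0 := by
    rw [map_add, hJ2]
    simp only [inner_add_left, inner_add_right, inner_sub_left, inner_sub_right, inner_neg_right, hx, hy, hxy, hJxy, i1, i2, i3, i4, i5, i6, i7, i8, i9, i10, i11, i12]; ring
  have h5 := hν' _ _ c5a c5b
  have c6a : ⟪x - J y, J x - y⟫ = 0 := by
    simp only [inner_add_left, inner_add_right, inner_sub_left, inner_sub_right, inner_neg_right, hx, hy, hxy, hJxy, i1, i2, i3, i4, i5, i6, i7, i8, i9, i10, i11, i12]; ring
  have c6b : ⟪J x - y, J (x - J y)⟫ = 0 := by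
    rw [map_sub, hJ2]
    simp only [inner_add_left, inner_add_right, inner_sub_left, inner_sub_right, inner_neg_right, hx, hy, hxy, hJxy, i1, i2, i3, i4, i5, i6, i7, i8, i9, i10, i11, i12]; ring
  have h6 := hν' _ _ c6a c6b
  have c7a : ⟪x + y, J x - J y⟫ = 0 := by
    simp only [inner_add_left, inner_add_right, inner_sub_left, inner_sub_right, inner_neg_right, hx, hy, hxy, hJxy, i1, i2, i3, i4, i5, i6, i7, i8, i9, i10, i11, i12]; ring
  have c7b : ⟪J x - J y, J (x + y)⟫ = 0 := by
    rw [map_add]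
    simp only [inner_add_left, inner_add_right, inner_sub_left, inner_sub_right, inner_neg_right, hx, hy, hxy, hJxy, i1, i2, i3, i4, i5, i6, i7, i8, i9, i10, i11, i12]; ring
  have h7 := hν' _ _ c7a c7b
  have c8a : ⟪x - y, J x + J y⟫ = 0 := by
    simp only [inner_add_left, inner_add_right, inner_sub_left, inner_sub_right, inner_neg_right, hx, hy, hxy, hJxy, i1, i2, i3, i4, i5, i6, i7, i8, i9, i10, i11, i12]; ring
  have c8b : ⟪J x + J y, J (x - y)⟫ = 0 := by
    rw [map_sub]
    simp only [inner_add_left, inner_add_right, inner_sub_left, inner_sub_right, inner_neg_right, hx, hy, hxy, hJxy, i1, i2, i3, i4, i5, i6, i7, i8, i9, i10, i11, i12]; ring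
  have h8 := hν' _ _ c8a c8b
  -- expand multilinearly and normalize the inner-product values
  simp only [map_add, map_sub, R_sub1, LinearMap.add_apply, LinearMap.sub_apply,
    inner_add_left, inner_add_right, inner_sub_left, inner_sub_right,
    hx, hy, i1, i2, i3, i4, i5, i6, i7, i8, i9, i10, i11, i12, hxy, hJxy] at h5 h6 h7 h8
  -- symmetry instances (certificate support)
  have s1 := hR.1 x x y y
  have s2 := hRJ x x y y
  have s3 := hR.1 x x (J y) (J y)
  have s4 : R x x (J y) (J y) = R (J x) (J x) y y := by
    have := hRJ x x (J y) (J y)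
    simp only [hJ2, map_neg, LinearMap.neg_apply, neg_neg] at this
    exact this
  have s5 := hR.1 x (J x) y (J y)
  have s6 := hR.2.1 x (J x) y (J y)
  have s7 : R x (J x) y (J y) = R (J x) x (J y) y := by
    have := hRJ x (J x) y (J y)
    simp only [hJ2, map_neg, LinearMap.neg_apply, neg_neg] at this
    exact this
  have s8 := hR.2.2.2 x (J x) (J y) y
  have s9 := hR.2.1 x y x y
  have s10 := hRJ x y x y
  have s11 := hR.2.1 x y (J x) (J y)
  have s12 := hR.2.2.1 x y (J x) (J y)
  have s13 := hR.2.1 x (J y) x (J y)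
  have s14 : R x (J y) x (J y) = R (J x) y (J x) y := by
    have := hRJ x (J y) x (J y)
    simp only [hJ2, map_neg, LinearMap.neg_apply, neg_neg] at this
    exact this
  have s15 := hR.1 x (J y) (J x) y
  have s16 := hR.2.1 x (J y) (J x) y
  have s17 : R x (J y) y (J x) = R (J x) y (J y) x := by
    have := hRJ x (J y) y (J x)
    simp only [hJ2, map_neg, LinearMap.neg_apply, neg_neg] at this
    exact this
  have s18 := hR.2.2.1 (J x) x y (J y)
  have s19 := hR.2.2.1 (J x) x (J y) y
  have s20 := hR.2.2.2 (J x) (J x) y y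
  have s21 := hR.2.2.2 (J x) (J x) (J y) (J y)
  have s22 := hR.1 (J x) y (J y) x
  have s23 := hR.2.2.2 (J x) y (J y) x
  have s24 := hR.1 y y (J y) (J y)
  have s25 := hR.2.2.2 y y (J y) (J y)
  have s26 := hR.2.1 y (J y) y (J y)
  linarith [h1, h2, h5, h6, h7, h8, s1, s2, s3, s4, s5, s6, s7, s8, s9, s10, s11,
    s12, s13, s14, s15, s16, s17, s18, s19, s20, s21, s22, s23, s24, s25, s26]

lemma point_S (hR : IsCurvatureLike R)
    (hJ2 : ∀ x : V, J (J x) = -x) (hJorth : ∀ x y : V, ⟪J x, J y⟫ = ⟪x, y⟫)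
    (ν : ℝ)
    (hν' : ∀ u v : V, ⟪u, v⟫ = 0 → ⟪v, J u⟫ = 0 →
      R u v v u = ν * (⟪u, u⟫ * ⟪v, v⟫))
    (x y : V) (hx : ⟪x,x⟫ = 1) :
    R x y y x = ν * (⟪y,y⟫ - ⟪x,y⟫^2 - ⟪J x,y⟫^2)
      + 2*⟪J x,y⟫*(R x y (J x) x) - ⟪J x,y⟫^2 * R x (J x) (J x) x := by
  have iJ' : ∀ u v : V, ⟪u, J v⟫ = -⟪J u, v⟫ := fun u v => by
    calc ⟪u, J v⟫ = ⟪J u, J (J v)⟫ := (hJorth _ _).symm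
    _ = ⟪J u, -v⟫ := by rw [hJ2]
    _ = -⟪J u, v⟫ := inner_neg_right _ _
  have i5 : ⟪x, J x⟫ = 0 := by
    have h := iJ' x x; have h2 : ⟪x, J x⟫ = ⟪J x, x⟫ := real_inner_comm _ _; linarith
  have i11 : ⟪J x, x⟫ = 0 := by rw [real_inner_comm, i5]
  have i3 : ⟪J x, J x⟫ = 1 := by rw [hJorth, hx]
  have cyx : ⟪y,x⟫ = ⟪x,y⟫ := real_inner_comm _ _
  have cyJx : ⟪y,J x⟫ = ⟪J x,y⟫ := real_inner_comm _ _
  have c1 : ⟪x, y - ⟪x,y⟫ • x - ⟪J x,y⟫ • J x⟫ = 0 := by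
    simp only [inner_sub_right, real_inner_smul_right, hx, i5, i11, i3, cyx, cyJx]
    ring
  have c2 : ⟪y - ⟪x,y⟫ • x - ⟪J x,y⟫ • J x, J x⟫ = 0 := by
    simp only [inner_sub_left, real_inner_smul_left, hx, i5, i11, i3, cyx, cyJx]
    ring
  have h := hν' x _ c1 c2
  have hin : ⟪y - ⟪x,y⟫ • x - ⟪J x,y⟫ • J x, y - ⟪x,y⟫ • x - ⟪J x,y⟫ • J x⟫
      = ⟪y,y⟫ - ⟪x,y⟫^2 - ⟪J x,y⟫^2 := by
    simp only [inner_sub_left, inner_sub_right, real_inner_smul_left,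
      real_inner_smul_right, hx, i5, i11, i3, cyx, cyJx]
    ring
  rw [hin, hx] at h
  simp only [map_sub, map_smul, LinearMap.sub_apply, LinearMap.smul_apply,
    smul_eq_mul] at h
  -- clean vanishing and symmetric atoms
  have e1 : R x x y x = 0 := by have := hR.1 x x y x; linarith
  have e2 : R x x x x = 0 := by have := hR.1 x x x x; linarith
  have e3 : R x x (J x) x = 0 := by have := hR.1 x x (J x) x; linarith
  have e4 : R x y x x = 0 := by have := hR.2.1 x y x x; linarith
  have e5 : R x (J x) x x = 0 := by have := hR.2.1 x (J x) x x; linarith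
  have e6 : R x (J x) y x = R x y (J x) x := by
    have p := hR.2.2.1 x (J x) y x
    have q := hR.1 y x x (J x)
    have r := hR.2.1 x y x (J x)
    have s := hR.2.2.1 x y x (J x)
    have t := hR.2.1 x (J x) y x
    -- via sw23 reasoning
    linarith [hR.2.1 x y (J x) x, hR.2.2.1 y x x (J x)]
  rw [e1, e2, e3, e4, e5, e6] at h
  linear_combination h

lemma trace_S {n : ℕ} (e : OrthonormalBasis (Fin (2*n)) ℝ V)
    (hR : IsCurvatureLike R)
    (hJ2 : ∀ x : V, J (J x) = -x) (hJorth : ∀ x y : V, ⟪J x, J y⟫ = ⟪x, y⟫)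
    (ν : ℝ)
    (hν' : ∀ u v : V, ⟪u, v⟫ = 0 → ⟪v, J u⟫ = 0 →
      R u v v u = ν * (⟪u, u⟫ * ⟪v, v⟫))
    (x : V) (hx : ⟪x,x⟫ = 1) :
    ∑ i, R x (e i) (e i) x = (2*(n:ℝ)-2)*ν + R x (J x) (J x) x := by
  have hone : ∀ i, ⟪e i, e i⟫ = (1:ℝ) := fun i => by
    rw [real_inner_self_eq_norm_sq, e.orthonormal.1 i, one_pow]
  have hJxJx : ⟪J x, J x⟫ = 1 := by rw [hJorth, hx]
  have P1 : ∑ i, ⟪x, e i⟫^2 = 1 := by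
    calc ∑ i, ⟪x, e i⟫^2 = ∑ i, ⟪x, e i⟫ * ⟪e i, x⟫ :=
          Finset.sum_congr rfl fun i _ => by rw [real_inner_comm (e i) x]; ring
    _ = ⟪x,x⟫ := e.sum_inner_mul_inner x x
    _ = 1 := hx
  have P2 : ∑ i, ⟪J x, e i⟫^2 = 1 := by
    calc ∑ i, ⟪J x, e i⟫^2 = ∑ i, ⟪J x, e i⟫ * ⟪e i, J x⟫ :=
          Finset.sum_congr rfl fun i _ => by rw [real_inner_comm (e i) (J x)]; ring
    _ = ⟪J x, J x⟫ := e.sum_inner_mul_inner (J x) (J x)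
    _ = 1 := hJxJx
  have P3 : ∑ i, ⟪J x, e i⟫ * R x (e i) (J x) x = R x (J x) (J x) x := by
    calc ∑ i, ⟪J x, e i⟫ * R x (e i) (J x) x
        = ∑ i, ⟪e i, J x⟫ * R x (e i) (J x) x :=
          Finset.sum_congr rfl fun i _ => by rw [real_inner_comm (e i) (J x)]
    _ = R x (J x) (J x) x := sum_lin2 e R x (J x) x (J x)
  have h0 : ∑ i, R x (e i) (e i) x
      = ∑ i, (ν - ν * ⟪x, e i⟫^2 - ν * ⟪J x, e i⟫^2
          + 2*(⟪J x, e i⟫ * R x (e i) (J x) x)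
          - ⟪J x, e i⟫^2 * R x (J x) (J x) x) :=
    Finset.sum_congr rfl fun i _ => by
      rw [point_S J R hR hJ2 hJorth ν hν' x (e i) hx, hone i]; ring
  rw [h0]
  simp only [Finset.sum_sub_distrib, Finset.sum_add_distrib, ← Finset.mul_sum,
    ← Finset.sum_mul, Finset.sum_const, Finset.card_univ, Fintype.card_fin,
    nsmul_eq_mul]
  rw [P1, P2, P3]
  push_cast; ring


lemma lemA {n : ℕ} (e : OrthonormalBasis (Fin (2*n)) ℝ V)
    (hR : IsCurvatureLike R)
    (hRJ : ∀ x y z u : V, R x y z u = R (J x) (J y) (J z) (J u))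
    (hJ2 : ∀ x : V, J (J x) = -x) (hJorth : ∀ x y : V, ⟪J x, J y⟫ = ⟪x, y⟫)
    (ν : ℝ)
    (hν' : ∀ u v : V, ⟪u, v⟫ = 0 → ⟪v, J u⟫ = 0 →
      R u v v u = ν * (⟪u, u⟫ * ⟪v, v⟫))
    (x w : V) (hx : ⟪x,x⟫ = 1) (h1 : ⟪x,w⟫ = 0) (h2 : ⟪J x,w⟫ = 0) :
    6 * R x w (J w) (J x)
      = (R x (J x) (J x) x - 2*(n:ℝ)*ν) * ⟪w,w⟫ + ∑ i, R w (e i) (e i) w := by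
  rcases eq_or_ne w 0 with rfl | hw
  · simp
  have hwn : ‖w‖ ≠ 0 := norm_ne_zero_iff.2 hw
  set u : V := ‖w‖⁻¹ • w with hu
  have huu : ⟪u,u⟫ = 1 := by
    rw [hu, real_inner_smul_left, real_inner_smul_right, real_inner_self_eq_norm_sq]
    field_simp
  have hxu : ⟪x,u⟫ = 0 := by rw [hu, real_inner_smul_right, h1, mul_zero]
  have hJxu : ⟪J x,u⟫ = 0 := by rw [hu, real_inner_smul_right, h2, mul_zero]
  have huJx : ⟪u, J x⟫ = 0 := by rw [real_inner_comm, hJxu]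
  have hl := local_rel J R hR hRJ hJ2 hJorth ν hν' x u hx huu hxu hJxu
  have ht := trace_S J R e hR hJ2 hJorth ν hν' u huu
  have hw_eq : w = ‖w‖ • u := (smul_inv_smul₀ hwn w).symm
  have hsc1 : R x w (J w) (J x) = ‖w‖^2 * R x u (J u) (J x) := by
    conv_lhs => rw [hw_eq]
    simp only [map_smul, LinearMap.smul_apply, smul_eq_mul]
    ring
  have hsc2 : ∑ i, R w (e i) (e i) w = ‖w‖^2 * ∑ i, R u (e i) (e i) u := by
    rw [Finset.mul_sum]
    refine Finset.sum_congr rfl fun i _ => ?_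
    conv_lhs => rw [hw_eq]
    simp only [map_smul, LinearMap.smul_apply, smul_eq_mul]
    ring
  have hw2 : ⟪w,w⟫ = ‖w‖^2 := real_inner_self_eq_norm_sq w
  rw [hw2, hsc1, hsc2]
  linear_combination (‖w‖^2) * hl - (‖w‖^2) * ht

lemma point_S'_aux {n : ℕ} (e : OrthonormalBasis (Fin (2*n)) ℝ V)
    (hR : IsCurvatureLike R)
    (hRJ : ∀ x y z u : V, R x y z u = R (J x) (J y) (J z) (J u))
    (hJ2 : ∀ x : V, J (J x) = -x) (hJorth : ∀ x y : V, ⟪J x, J y⟫ = ⟪x, y⟫)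
    (ν : ℝ)
    (hν' : ∀ u v : V, ⟪u, v⟫ = 0 → ⟪v, J u⟫ = 0 →
      R u v v u = ν * (⟪u, u⟫ * ⟪v, v⟫))
    (x y0 : V) (a b : ℝ) (hx : ⟪x,x⟫ = 1) (c1 : ⟪x,y0⟫ = 0) (c2 : ⟪J x,y0⟫ = 0) :
    6 * R x (y0 + a•x + b•(J x)) (J (y0 + a•x + b•(J x))) (J x)
      = 12*b*(R x y0 (J x) x) + 6*b^2*(R x (J x) (J x) x)
        + (R x (J x) (J x) x - 2*(n:ℝ)*ν) * ⟪y0,y0⟫ + ∑ i, R y0 (e i) (e i) y0 := by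
  have hA := lemA J R e hR hRJ hJ2 hJorth ν hν' x y0 hx c1 c2
  -- expand the left side multilinearly
  have hexp : R x (y0 + a•x + b•(J x)) (J (y0 + a•x + b•(J x))) (J x)
      = R x y0 (J y0) (J x) + 2*b*(R x y0 (J x) x) + b^2*(R x (J x) (J x) x) := by
    simp only [map_add, map_smul, LinearMap.add_apply, LinearMap.smul_apply,
      smul_eq_mul, hJ2, smul_neg, LinearMap.neg_apply, map_neg]
    have e1 : R x y0 (J x) (J x) = 0 := z2 R hR _ _ _
    have e2 : ∀ z : V, R x x z (J x) = 0 := fun z => z1 R hR _ _ _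
    have e3 : R x y0 x (J x) = - R x y0 (J x) x := p1 J R hR x y0
    have e4 : R x (J x) (J y0) (J x) = R x y0 (J x) x := jmix J R hR hRJ hJ2 x y0
    have e5 : R x (J x) (J x) (J x) = 0 := z2 R hR _ _ _
    have e6 : R x (J x) x (J x) = - R x (J x) (J x) x := p1 J R hR x (J x)
    rw [e1, e3, e4, e5, e6, e2, e2, e2]
    ring
  rw [hexp]
  linear_combination hA

lemma SJ (e : OrthonormalBasis (Fin (2*n)) ℝ V)
    (hRJ : ∀ x y z u : V, R x y z u = R (J x) (J y) (J z) (J u))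
    (hJ2 : ∀ x : V, J (J x) = -x) (hJorth : ∀ x y : V, ⟪J x, J y⟫ = ⟪x, y⟫)
    (x : V) :
    ∑ j, R (J x) (e j) (e j) (J x) = ∑ j, R x (e j) (e j) x := by
  have iJ' : ∀ u v : V, ⟪u, J v⟫ = -⟪J u, v⟫ := fun u v => by
    calc ⟪u, J v⟫ = ⟪J u, J (J v)⟫ := (hJorth _ _).symm
    _ = ⟪J u, -v⟫ := by rw [hJ2]
    _ = -⟪J u, v⟫ := inner_neg_right _ _
  have step1 : ∀ j, R (J x) (e j) (e j) (J x) = R x (J (e j)) (J (e j)) x := by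
    intro j
    have h := hRJ (J x) (e j) (e j) (J x)
    rw [hJ2] at h
    simp only [map_neg, R_neg1, LinearMap.neg_apply, neg_neg] at h
    exact h
  simp only [step1]
  have step2 : ∀ j, R x (J (e j)) (J (e j)) x
      = ∑ k, ⟪e k, J (e j)⟫ * R x (e k) (J (e j)) x := fun j =>
    (sum_lin2 e R x (J (e j)) x (J (e j))).symm
  simp only [step2]
  rw [Finset.sum_comm]
  refine Finset.sum_congr rfl fun k _ => ?_
  have step3 : ∀ j, ⟪e k, J (e j)⟫ * R x (e k) (J (e j)) x
      = ⟪e j, -(J (e k))⟫ * R x (e k) (J (e j)) x := by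
    intro j
    rw [inner_neg_right, iJ' (e k) (e j), real_inner_comm (J (e k)) (e j)]
  simp only [step3]
  rw [sum_lin3J e R J x (e k) x (-(J (e k)))]
  rw [map_neg, hJ2, neg_neg]

set_option maxHeartbeats 1000000 in
lemma trace_S' {n : ℕ} (e : OrthonormalBasis (Fin (2*n)) ℝ V)
    (hR : IsCurvatureLike R)
    (hRJ : ∀ x y z u : V, R x y z u = R (J x) (J y) (J z) (J u))
    (hJ2 : ∀ x : V, J (J x) = -x) (hJorth : ∀ x y : V, ⟪J x, J y⟫ = ⟪x, y⟫)
    (ν : ℝ)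
    (hν' : ∀ u v : V, ⟪u, v⟫ = 0 → ⟪v, J u⟫ = 0 →
      R u v v u = ν * (⟪u, u⟫ * ⟪v, v⟫))
    (x : V) (hx : ⟪x,x⟫ = 1) :
    6 * ∑ i, R x (e i) (J (e i)) (J x)
      = (2*(n:ℝ)+2) * R x (J x) (J x) x
        + (∑ i, ∑ j, R (e i) (e j) (e j) (e i))
        - (2*(n:ℝ)+2)*(2*(n:ℝ)-2)*ν := by
  have iJ' : ∀ u v : V, ⟪u, J v⟫ = -⟪J u, v⟫ := fun u v => by
    calc ⟪u, J v⟫ = ⟪J u, J (J v)⟫ := (hJorth _ _).symm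
    _ = ⟪J u, -v⟫ := by rw [hJ2]
    _ = -⟪J u, v⟫ := inner_neg_right _ _
  have i5 : ⟪x, J x⟫ = 0 := by
    have h := iJ' x x; have h2 : ⟪x, J x⟫ = ⟪J x, x⟫ := real_inner_comm _ _; linarith
  have i11 : ⟪J x, x⟫ = 0 := by rw [real_inner_comm, i5]
  have i3 : ⟪J x, J x⟫ = 1 := by rw [hJorth, hx]
  have hone : ∀ i, ⟪e i, e i⟫ = (1:ℝ) := fun i => by
    rw [real_inner_self_eq_norm_sq, e.orthonormal.1 i, one_pow]
  -- Parseval-type facts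
  have Pxx : ∑ i, ⟪e i, x⟫ * ⟪e i, x⟫ = 1 := by
    calc ∑ i, ⟪e i, x⟫ * ⟪e i, x⟫ = ∑ i, ⟪x, e i⟫ * ⟪e i, x⟫ :=
          Finset.sum_congr rfl fun i _ => by rw [real_inner_comm (e i) x]
    _ = ⟪x,x⟫ := e.sum_inner_mul_inner x x
    _ = 1 := hx
  have PJxJx : ∑ i, ⟪e i, J x⟫ * ⟪e i, J x⟫ = 1 := by
    calc ∑ i, ⟪e i, J x⟫ * ⟪e i, J x⟫ = ∑ i, ⟪J x, e i⟫ * ⟪e i, J x⟫ :=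
          Finset.sum_congr rfl fun i _ => by rw [real_inner_comm (e i) (J x)]
    _ = ⟪J x, J x⟫ := e.sum_inner_mul_inner (J x) (J x)
    _ = 1 := i3
  have PxJx : ∑ i, ⟪e i, x⟫ * ⟪e i, J x⟫ = 0 := by
    calc ∑ i, ⟪e i, x⟫ * ⟪e i, J x⟫ = ∑ i, ⟪x, e i⟫ * ⟪e i, J x⟫ :=
          Finset.sum_congr rfl fun i _ => by rw [real_inner_comm (e i) x]
    _ = ⟪x, J x⟫ := e.sum_inner_mul_inner x (J x)
    _ = 0 := i5
  -- the pointwise identity for each basis vector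
  have key : ∀ i, 6 * R x (e i) (J (e i)) (J x)
      = 12*(⟪e i, J x⟫*(R x (e i) (J x) x))
        - 6*((⟪e i, J x⟫*⟪e i, J x⟫)*(R x (J x) (J x) x))
        + ((R x (J x) (J x) x - 2*(n:ℝ)*ν)
            - (R x (J x) (J x) x - 2*(n:ℝ)*ν)*(⟪e i, x⟫*⟪e i, x⟫)
            - (R x (J x) (J x) x - 2*(n:ℝ)*ν)*(⟪e i, J x⟫*⟪e i, J x⟫))
        + ∑ j, R (e i - ⟪e i,x⟫ • x - ⟪e i,J x⟫ • J x) (e j) (e j)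
            (e i - ⟪e i,x⟫ • x - ⟪e i,J x⟫ • J x) := by
    intro i
    have c1 : ⟪x, e i - ⟪e i,x⟫ • x - ⟪e i,J x⟫ • J x⟫ = 0 := by
      simp only [inner_sub_right, real_inner_smul_right, hx, i5]
      rw [real_inner_comm x (e i)]; ring
    have c2 : ⟪J x, e i - ⟪e i,x⟫ • x - ⟪e i,J x⟫ • J x⟫ = 0 := by
      simp only [inner_sub_right, real_inner_smul_right, i11, i3]
      rw [real_inner_comm (J x) (e i)]; ring
    have hin : ⟪e i - ⟪e i,x⟫ • x - ⟪e i,J x⟫ • J x,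
        e i - ⟪e i,x⟫ • x - ⟪e i,J x⟫ • J x⟫
        = 1 - ⟪e i,x⟫*⟪e i,x⟫ - ⟪e i,J x⟫*⟪e i,J x⟫ := by
      simp only [inner_sub_left, inner_sub_right, real_inner_smul_left,
        real_inner_smul_right, hx, i5, i11, i3, hone i]
      rw [real_inner_comm x (e i), real_inner_comm (J x) (e i)]; ring
    have hdec : e i - ⟪e i,x⟫ • x - ⟪e i,J x⟫ • J x + ⟪e i,x⟫ • x + ⟪e i,J x⟫ • J x
        = e i := by abel
    have haux := point_S'_aux J R e hR hRJ hJ2 hJorth ν hν' x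
      (e i - ⟪e i,x⟫ • x - ⟪e i,J x⟫ • J x) ⟪e i,x⟫ ⟪e i,J x⟫ hx c1 c2
    rw [hdec, hin] at haux
    have hg : R x (e i - ⟪e i,x⟫ • x - ⟪e i,J x⟫ • J x) (J x) x
        = R x (e i) (J x) x - ⟪e i,J x⟫ * R x (J x) (J x) x := by
      simp only [map_sub, R_sub1, map_smul, LinearMap.sub_apply, LinearMap.smul_apply,
        smul_eq_mul]
      rw [z1 R hR x (J x) x]
      ring
    rw [hg] at haux
    linear_combination haux
  -- sum the pointwise identity
  have hsum : ∑ i, (6 * R x (e i) (J (e i)) (J x)) = 6 * ∑ i, R x (e i) (J (e i)) (J x) :=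
    (Finset.mul_sum _ _ _).symm
  rw [← hsum]
  rw [Finset.sum_congr rfl fun i _ => key i]
  -- component sums
  have PbR : ∑ i, ⟪e i, J x⟫ * R x (e i) (J x) x = R x (J x) (J x) x :=
    sum_lin2 e R x (J x) x (J x)
  -- the double-sum term
  have perj : ∀ jj, (∑ i, R (e i - ⟪e i,x⟫ • x - ⟪e i,J x⟫ • J x) (e jj) (e jj)
        (e i - ⟪e i,x⟫ • x - ⟪e i,J x⟫ • J x))
      = (∑ i, R (e i) (e jj) (e jj) (e i)) - R x (e jj) (e jj) x
        - R (J x) (e jj) (e jj) (J x) := by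
    intro jj
    have exp : ∀ i, R (e i - ⟪e i,x⟫ • x - ⟪e i,J x⟫ • J x) (e jj) (e jj)
          (e i - ⟪e i,x⟫ • x - ⟪e i,J x⟫ • J x)
        = R (e i) (e jj) (e jj) (e i)
          - ⟪e i,x⟫ * (R x (e jj) (e jj) (e i))
          - ⟪e i,J x⟫ * (R (J x) (e jj) (e jj) (e i))
          - ⟪e i,x⟫ * (R (e i) (e jj) (e jj) x)
          + (⟪e i,x⟫ * ⟪e i,x⟫) * (R x (e jj) (e jj) x)
          + (⟪e i,x⟫ * ⟪e i,J x⟫) * (R (J x) (e jj) (e jj) x)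
          - ⟪e i,J x⟫ * (R (e i) (e jj) (e jj) (J x))
          + (⟪e i,x⟫ * ⟪e i,J x⟫) * (R x (e jj) (e jj) (J x))
          + (⟪e i,J x⟫ * ⟪e i,J x⟫) * (R (J x) (e jj) (e jj) (J x)) := fun i => by
      simp only [map_sub, R_sub1, map_smul, LinearMap.sub_apply, LinearMap.smul_apply,
        smul_eq_mul]
      ring
    rw [Finset.sum_congr rfl fun i _ => exp i]
    simp only [Finset.sum_add_distrib, Finset.sum_sub_distrib, ← Finset.sum_mul]
    rw [Pxx, PxJx, PJxJx,
      sum_lin4 e R x (e jj) (e jj) x,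
      sum_lin4 e R (J x) (e jj) (e jj) (J x),
      sum_lin1 e R (e jj) (e jj) x x,
      sum_lin1 e R (e jj) (e jj) (J x) (J x)]
    ring
  -- split all the sums
  simp only [Finset.sum_add_distrib, Finset.sum_sub_distrib, ← Finset.mul_sum,
    ← Finset.sum_mul, Finset.sum_const, Finset.card_univ, Fintype.card_fin,
    nsmul_eq_mul]
  rw [Pxx, PJxJx, PbR]
  have hT : (∑ i, ∑ j, R (e i - ⟪e i,x⟫ • x - ⟪e i,J x⟫ • J x) (e j) (e j)
        (e i - ⟪e i,x⟫ • x - ⟪e i,J x⟫ • J x))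
      = (∑ i, ∑ j, R (e i) (e j) (e j) (e i))
        - ((2*(n:ℝ)-2)*ν + R x (J x) (J x) x)
        - ((2*(n:ℝ)-2)*ν + R x (J x) (J x) x) := by
    rw [Finset.sum_comm]
    rw [Finset.sum_congr rfl fun jj _ => perj jj]
    rw [Finset.sum_sub_distrib, Finset.sum_sub_distrib,
      SJ J R e hRJ hJ2 hJorth x,
      trace_S J R e hR hJ2 hJorth ν hν' x hx, Finset.sum_comm]
  rw [hT]
  push_cast
  ring

end
end Stmt2Aux

set_option maxHeartbeats 1000000 in
theorem stmt_2 {V : Type*} [NormedAddCommGroup V] [InnerProductSpace ℝ V]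
    [FiniteDimensional ℝ V] (n : ℕ) (hn : 2 ≤ n)
    (hdim : Module.finrank ℝ V = 2 * n)
    (J : V →ₗ[ℝ] V)
    (hJ2 : ∀ x : V, J (J x) = -x)
    (hJorth : ∀ x y : V, ⟪J x, J y⟫ = ⟪x, y⟫)
    (R : V →ₗ[ℝ] V →ₗ[ℝ] V →ₗ[ℝ] V →ₗ[ℝ] ℝ)
    (hR : IsCurvatureLike R)
    (hRJ : ∀ x y z u : V, R x y z u = R (J x) (J y) (J z) (J u))
    (e : OrthonormalBasis (Fin (2 * n)) ℝ V)
    -- the Ricci tensor, the tensor S', and the scalar curvatures τ, τ'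
    (S : V → V → ℝ) (hS : ∀ x y : V, S x y = ∑ i, R x (e i) (e i) y)
    (S' : V → V → ℝ) (hS' : ∀ x y : V, S' x y = ∑ i, R x (e i) (J (e i)) (J y))
    (τ : ℝ) (hτ : τ = ∑ i, S (e i) (e i))
    (τ' : ℝ) (hτ' : τ' = ∑ i, S' (e i) (e i))
    -- `R` has constant antiholomorphic sectional curvature ν
    (ν : ℝ)
    (hν : ∀ x y : V, ‖x‖ = 1 → ‖y‖ = 1 → ⟪x, y⟫ = 0 → ⟪y, J x⟫ = 0 →
      R x y y x = ν) :
    ∀ x y : V, ((n : ℝ) + 1) * S x y - 3 * S' x y =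
      ((((n : ℝ) + 1) * τ - 3 * τ') / (2 * (n : ℝ))) * ⟪x, y⟫ := by
  intro x y
  have hν' := Stmt2Aux.scaled J R hJ2 ν hν
  -- τ as a double sum
  have hτs : τ = ∑ i, ∑ j, R (e i) (e j) (e j) (e i) := by
    rw [hτ]; exact Finset.sum_congr rfl fun i _ => hS (e i) (e i)
  set τs : ℝ := ∑ i, ∑ j, R (e i) (e j) (e j) (e i) with hτsdef
  set c0 : ℝ := 2*((n:ℝ)+1)*(2*(n:ℝ)-2)*ν - τs/2 with hc0
  -- the quadratic form identity for unit vectors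
  have q : ∀ z : V, ⟪z,z⟫ = 1 →
      ((n:ℝ)+1) * (∑ i, R z (e i) (e i) z)
        - 3 * (∑ i, R z (e i) (J (e i)) (J z)) = c0 := by
    intro z hz
    have h1 := Stmt2Aux.trace_S J R e hR hJ2 hJorth ν hν' z hz
    have h2 := Stmt2Aux.trace_S' J R e hR hRJ hJ2 hJorth ν hν' z hz
    rw [hc0, hτsdef]
    linear_combination ((n:ℝ)+1) * h1 - (1/2 : ℝ) * h2
  -- the quadratic form identity for all vectors
  have Q : ∀ v : V, ((n:ℝ)+1) * (∑ i, R v (e i) (e i) v)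
      - 3 * (∑ i, R v (e i) (J (e i)) (J v)) = c0 * ⟪v,v⟫ := by
    intro v
    rcases eq_or_ne v 0 with rfl | hv
    · simp
    have hvn : ‖v‖ ≠ 0 := norm_ne_zero_iff.2 hv
    set u : V := ‖v‖⁻¹ • v with hu
    have huu : ⟪u,u⟫ = 1 := by
      rw [hu, real_inner_smul_left, real_inner_smul_right, real_inner_self_eq_norm_sq]
      field_simp
    have hq := q u huu
    have hv_eq : v = ‖v‖ • u := (smul_inv_smul₀ hvn v).symm
    have hsc1 : ∑ i, R v (e i) (e i) v = ‖v‖^2 * ∑ i, R u (e i) (e i) u := by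
      rw [Finset.mul_sum]
      refine Finset.sum_congr rfl fun i _ => ?_
      conv_lhs => rw [hv_eq]
      simp only [map_smul, LinearMap.smul_apply, smul_eq_mul]
      ring
    have hsc2 : ∑ i, R v (e i) (J (e i)) (J v)
        = ‖v‖^2 * ∑ i, R u (e i) (J (e i)) (J u) := by
      rw [Finset.mul_sum]
      refine Finset.sum_congr rfl fun i _ => ?_
      conv_lhs => rw [hv_eq]
      simp only [map_smul, LinearMap.smul_apply, smul_eq_mul]
      ring
    have hvv : ⟪v,v⟫ = ‖v‖^2 := real_inner_self_eq_norm_sq v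
    rw [hsc1, hsc2, hvv]
    linear_combination (‖v‖^2) * hq
  -- symmetry of the per-term expressions
  have symS : ∀ u v : V, ∀ i, R v (e i) (e i) u = R u (e i) (e i) v := by
    intro u v i
    have p := hR.2.2.1 v (e i) (e i) u
    have q1 := hR.1 (e i) u v (e i)
    have r := hR.2.1 u (e i) v (e i)
    have s := hR.2.2.1 u (e i) v (e i)
    linarith [hR.2.1 u (e i) (e i) v, hR.2.2.1 (e i) u v (e i),
      hR.1 u (e i) v (e i), hR.1 v (e i) u (e i), hR.2.1 v (e i) u (e i),
      hR.2.2.1 (e i) v u (e i)]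
  have symS' : ∀ u v : V, ∀ i, R v (e i) (J (e i)) (J u) = R u (e i) (J (e i)) (J v) := by
    intro u v i
    have h := hRJ v (e i) (J (e i)) (J u)
    rw [hJ2, hJ2] at h
    simp only [map_neg, LinearMap.neg_apply] at h
    -- h : R v (e i) (J e i) (J u) = R (J v) (J e i) (e i) u  (two negs cancel)
    have p := hR.2.2.1 (J v) (J (e i)) (e i) u
    have q1 := hR.1 (e i) u (J v) (J (e i))
    have r := hR.2.1 u (e i) (J v) (J (e i))
    linarith
  -- polarization
  have hps := Q (x + y)
  have hpx := Q x
  have hpy := Q y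
  have hexp1 : ∑ i, R (x+y) (e i) (e i) (x+y)
      = (∑ i, R x (e i) (e i) x) + 2 * (∑ i, R x (e i) (e i) y)
        + (∑ i, R y (e i) (e i) y) := by
    rw [Finset.mul_sum, ← Finset.sum_add_distrib, ← Finset.sum_add_distrib]
    refine Finset.sum_congr rfl fun i _ => ?_
    simp only [map_add, LinearMap.add_apply]
    rw [symS y x i]
    ring
  have hexp2 : ∑ i, R (x+y) (e i) (J (e i)) (J (x+y))
      = (∑ i, R x (e i) (J (e i)) (J x)) + 2 * (∑ i, R x (e i) (J (e i)) (J y))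
        + (∑ i, R y (e i) (J (e i)) (J y)) := by
    rw [Finset.mul_sum, ← Finset.sum_add_distrib, ← Finset.sum_add_distrib]
    refine Finset.sum_congr rfl fun i _ => ?_
    simp only [map_add, LinearMap.add_apply]
    rw [symS' y x i]
    ring
  rw [hexp1, hexp2] at hps
  have hinn : ⟪x+y, x+y⟫ = ⟪x,x⟫ + 2*⟪x,y⟫ + ⟪y,y⟫ := by
    rw [inner_add_left, inner_add_right, inner_add_right, real_inner_comm y x]
    ring
  rw [hinn] at hps
  -- identify the constant
  have hconst : ((n:ℝ)+1) * τ - 3 * τ' = 2*(n:ℝ) * c0 := by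
    have hone : ∀ i, ⟪e i, e i⟫ = (1:ℝ) := fun i => by
      rw [real_inner_self_eq_norm_sq, e.orthonormal.1 i, one_pow]
    have h1 : ((n:ℝ)+1) * τ - 3 * τ'
        = ∑ i, (((n:ℝ)+1) * (∑ j, R (e i) (e j) (e j) (e i))
            - 3 * (∑ j, R (e i) (e j) (J (e j)) (J (e i)))) := by
      rw [hτ, hτ', Finset.sum_sub_distrib, ← Finset.mul_sum, ← Finset.mul_sum]
      rw [Finset.sum_congr rfl fun i _ => hS (e i) (e i),
        Finset.sum_congr rfl fun i _ => hS' (e i) (e i)]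
    rw [h1]
    have h2 : ∀ i : Fin (2*n), (((n:ℝ)+1) * (∑ j, R (e i) (e j) (e j) (e i))
        - 3 * (∑ j, R (e i) (e j) (J (e j)) (J (e i)))) = c0 := fun i => by
      have := Q (e i)
      rw [hone i] at this
      linarith
    rw [Finset.sum_congr rfl fun i _ => h2 i, Finset.sum_const, Finset.card_univ,
      Fintype.card_fin, nsmul_eq_mul]
    push_cast
    ring
  have hn0 : (2*(n:ℝ)) ≠ 0 := by
    have : (0:ℝ) < (n:ℝ) := by
      have : 0 < n := lt_of_lt_of_le (by norm_num) hn
      exact_mod_cast this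
    positivity
  have hdivc : (((n:ℝ)+1) * τ - 3 * τ') / (2*(n:ℝ)) = c0 := by
    rw [hconst]
    field_simp
  rw [hS, hS', hdivc]
  linarith [hps, hpx, hpy]
end

section
/- Let V be a real inner product space of dimension 2n (n ≥ 2) with an orthogonal complex structure J, and let R be a curvature-like tensor on V satisfying R(x,y,z,u) = R(Jx,Jy,Jz,Ju) for all x, y, z, u. If R has constant antiholomorphic sectional curvature ν, then ν = ((2n+1)τ − 3τ') / (8n(n² − 1)). -/
open scoped RealInnerProductSpace


section Aux

universe u

variable {V : Type u} [NormedAddCommGroup V] [InnerProductSpace ℝ V]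

/-- The diagonal sum of a bilinear form over an orthonormal basis is basis independent. -/
lemma sum_diag_eq_aux {ι κ : Type*} [Fintype ι] [Fintype κ] [DecidableEq κ]
    (b : OrthonormalBasis ι ℝ V) (c : OrthonormalBasis κ ℝ V)
    (T : V →ₗ[ℝ] V →ₗ[ℝ] ℝ) :
    ∑ i, T (b i) (b i) = ∑ j, T (c j) (c j) := by
  have h1 : ∀ i, T (b i) (b i)
      = ∑ k, ∑ j, (⟪c j, b i⟫ * ⟪c k, b i⟫) * T (c j) (c k) := by
    intro i
    conv_lhs => rw [← c.sum_repr' (b i)]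
    simp only [map_sum, LinearMap.sum_apply, map_smul, LinearMap.smul_apply, smul_eq_mul]
    refine Finset.sum_congr rfl fun k _ => ?_
    rw [Finset.mul_sum]
    exact Finset.sum_congr rfl fun j _ => by ring
  calc ∑ i, T (b i) (b i)
      = ∑ i, ∑ k, ∑ j, (⟪c j, b i⟫ * ⟪c k, b i⟫) * T (c j) (c k) :=
        Finset.sum_congr rfl fun i _ => h1 i
    _ = ∑ k, ∑ j, (∑ i, ⟪c j, b i⟫ * ⟪c k, b i⟫) * T (c j) (c k) := by
        rw [Finset.sum_comm]
        refine Finset.sum_congr rfl fun k _ => ?_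
        rw [Finset.sum_comm]
        refine Finset.sum_congr rfl fun j _ => ?_
        rw [← Finset.sum_mul]
    _ = ∑ k, ∑ j, (if j = k then (1:ℝ) else 0) * T (c j) (c k) := by
        refine Finset.sum_congr rfl fun k _ => Finset.sum_congr rfl fun j _ => ?_
        congr 1
        have h2 : ∀ i, ⟪c k, b i⟫ = ⟪b i, c k⟫ := fun i => real_inner_comm _ _
        simp_rw [h2]
        rw [b.sum_inner_mul_inner (c j) (c k)]
        exact orthonormal_iff_ite.mp c.orthonormal j k
    _ = ∑ k, T (c k) (c k) := by
        refine Finset.sum_congr rfl fun k _ => ?_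
        simp

end Aux


universe u

/-- Existence of an adapted ("unitary") orthonormal family for an orthogonal complex
structure on a real inner product space of dimension `2 * m`. -/
lemma exists_adapted_family : ∀ (m : ℕ) {V : Type u} [NormedAddCommGroup V]
    [InnerProductSpace ℝ V] [FiniteDimensional ℝ V] (J : V →ₗ[ℝ] V),
    (∀ x : V, J (J x) = -x) → (∀ x y : V, ⟪J x, J y⟫ = ⟪x, y⟫) →
    Module.finrank ℝ V = 2 * m →
    ∃ x : Fin m → V, (∀ k l, ⟪x k, x l⟫ = if k = l then 1 else 0) ∧
      (∀ k l, ⟪x k, J (x l)⟫ = 0) := by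
  intro m
  induction m with
  | zero =>
    intro V _ _ _ J hJ2 hJo hdim
    exact ⟨fun k => k.elim0, fun k => k.elim0, fun k => k.elim0⟩
  | succ m ih =>
    intro V _ _ _ J hJ2 hJo hdim
    -- basic facts about J
    have hadj : ∀ a b : V, ⟪a, J b⟫ = -⟪J a, b⟫ := by
      intro a b
      have h := hJo a (J b)
      rw [hJ2 b] at h
      rw [← h]
      simp [inner_neg_right]
    have hJv0 : ∀ v : V, ⟪v, J v⟫ = 0 := by
      intro v
      have h := hadj v v
      have h2 : ⟪J v, v⟫ = ⟪v, J v⟫ := real_inner_comm _ _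
      linarith
    -- pick a unit vector
    have : Nontrivial V := Module.nontrivial_of_finrank_pos (R := ℝ) (M := V) (by omega)
    obtain ⟨v0, hv0⟩ := exists_ne (0 : V)
    set u : V := ‖v0‖⁻¹ • v0 with hu_def
    have hu : ‖u‖ = 1 := norm_smul_inv_norm hv0
    have huu : ⟪u, u⟫ = 1 := by
      rw [real_inner_self_eq_norm_mul_norm, hu]; norm_num
    have hJuJu : ⟪J u, J u⟫ = 1 := by rw [hJo]; exact huu
    -- the spanning family of the 2-dim J-invariant subspace
    set f : Bool → V := fun b => if b then J u else u with hf_def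
    have horthf : Orthonormal ℝ f := by
      rw [orthonormal_iff_ite]
      intro i j
      have hJu0' : ⟪J u, u⟫ = 0 := by rw [real_inner_comm]; exact hJv0 u
      cases i <;> cases j <;>
        simp [hf_def, huu, hJuJu, hJv0 u, hJu0', hu, (by have := norm_nonneg (J u); rw [real_inner_self_eq_norm_mul_norm] at hJuJu; nlinarith : ‖J u‖ = 1)]
    set W : Submodule ℝ V := Submodule.span ℝ (Set.range f) with hW_def
    have huW : u ∈ W := Submodule.subset_span ⟨false, rfl⟩
    have hJuW : J u ∈ W := Submodule.subset_span ⟨true, rfl⟩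
    set K : Submodule ℝ V := Wᗮ with hK_def
    -- membership criteria for K
    have hmemK : ∀ w : V, w ∈ K ↔ (⟪u, w⟫ = 0 ∧ ⟪J u, w⟫ = 0) := by
      intro w
      constructor
      · intro hw
        exact ⟨(Submodule.mem_orthogonal W w).mp hw u huW,
          (Submodule.mem_orthogonal W w).mp hw (J u) hJuW⟩
      · rintro ⟨h1, h2⟩
        rw [Submodule.mem_orthogonal]
        intro z hz
        induction hz using Submodule.span_induction with
        | mem z hzm =>
          obtain ⟨b, rfl⟩ := hzm
          cases b
          · simpa [hf_def] using h1
          · simpa [hf_def] using h2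
        | zero => simp
        | add a b _ _ ha hb => rw [inner_add_left, ha, hb]; ring
        | smul r a _ ha => rw [real_inner_smul_left, ha]; ring
    -- J maps K into K
    have hJK : ∀ w ∈ K, J w ∈ K := by
      intro w hw
      obtain ⟨h1, h2⟩ := (hmemK w).mp hw
      rw [hmemK]
      constructor
      · rw [hadj u w, h2]
        ring
      · rw [hJo]
        exact h1
    -- restricted complex structure
    set J' : K →ₗ[ℝ] K := J.restrict hJK with hJ'_def
    have hJ'coe : ∀ w : K, (J' w : V) = J (w : V) := fun w => rfl
    have hJ'2 : ∀ w : K, J' (J' w) = -w := by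
      intro w
      apply Subtype.ext
      rw [Submodule.coe_neg]
      rw [hJ'coe, hJ'coe]
      exact hJ2 _
    have hJ'o : ∀ a b : K, ⟪J' a, J' b⟫ = ⟪a, b⟫ := by
      intro a b
      rw [Submodule.coe_inner, Submodule.coe_inner, hJ'coe, hJ'coe]
      exact hJo _ _
    -- dimension count
    have hdimW : Module.finrank ℝ W = 2 := by
      rw [hW_def, finrank_span_eq_card horthf.linearIndependent]
      simp
    have hdimK : Module.finrank ℝ K = 2 * m := by
      have h3 := Submodule.finrank_add_finrank_orthogonal (K := W)
      rw [hdimW, hdim] at h3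
      show Module.finrank ℝ ↥(Wᗮ) = 2 * m
      omega
    obtain ⟨y, hy1, hy2⟩ := ih J' hJ'2 hJ'o hdimK
    -- assemble
    refine ⟨Fin.cons u (fun k => (y k : V)), ?_, ?_⟩
    · intro k l
      refine Fin.cases ?_ ?_ k
      · refine Fin.cases ?_ ?_ l
        · simpa using huu
        · intro j
          simp only [Fin.cons_zero, Fin.cons_succ]
          have := ((hmemK _).mp (y j).2).1
          simp [this, (Fin.succ_ne_zero j).symm]
      · intro i
        refine Fin.cases ?_ ?_ l
        · simp only [Fin.cons_zero, Fin.cons_succ]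
          have := ((hmemK _).mp (y i).2).1
          rw [real_inner_comm]
          simp [this, Fin.succ_ne_zero i]
        · intro j
          simp only [Fin.cons_succ]
          have h := hy1 i j
          rw [Submodule.coe_inner] at h
          rw [h]
          simp [Fin.succ_inj]
    · intro k l
      refine Fin.cases ?_ ?_ k
      · refine Fin.cases ?_ ?_ l
        · exact hJv0 u
        · intro j
          simp only [Fin.cons_zero, Fin.cons_succ]
          exact ((hmemK _).mp (hJK _ (y j).2)).1
      · intro i
        refine Fin.cases ?_ ?_ l
        · simp only [Fin.cons_zero, Fin.cons_succ]
          rw [real_inner_comm]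
          exact ((hmemK _).mp (y i).2).2
        · intro j
          simp only [Fin.cons_succ]
          have h := hy2 i j
          rw [Submodule.coe_inner, hJ'coe] at h
          exact h
set_option maxHeartbeats 2000000 in
theorem stmt_3 {V : Type*} [NormedAddCommGroup V] [InnerProductSpace ℝ V]
    [FiniteDimensional ℝ V] (n : ℕ) (hn : 2 ≤ n)
    (hdim : Module.finrank ℝ V = 2 * n)
    (J : V →ₗ[ℝ] V)
    (hJ2 : ∀ x : V, J (J x) = -x)
    (hJorth : ∀ x y : V, ⟪J x, J y⟫ = ⟪x, y⟫)
    (R : V →ₗ[ℝ] V →ₗ[ℝ] V →ₗ[ℝ] V →ₗ[ℝ] ℝ)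
    (hR : IsCurvatureLike R)
    (hRJ : ∀ x y z u : V, R x y z u = R (J x) (J y) (J z) (J u))
    (e : OrthonormalBasis (Fin (2 * n)) ℝ V)
    -- the Ricci tensor, the tensor S', and the scalar curvatures τ, τ'
    (S : V → V → ℝ) (hS : ∀ x y : V, S x y = ∑ i, R x (e i) (e i) y)
    (S' : V → V → ℝ) (hS' : ∀ x y : V, S' x y = ∑ i, R x (e i) (J (e i)) (J y))
    (τ : ℝ) (hτ : τ = ∑ i, S (e i) (e i))
    (τ' : ℝ) (hτ' : τ' = ∑ i, S' (e i) (e i))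
    -- `R` has constant antiholomorphic sectional curvature ν
    (ν : ℝ)
    (hν : ∀ x y : V, ‖x‖ = 1 → ‖y‖ = 1 → ⟪x, y⟫ = 0 → ⟪y, J x⟫ = 0 →
      R x y y x = ν) :
    ν = ((2 * (n : ℝ) + 1) * τ - 3 * τ') / (8 * (n : ℝ) * ((n : ℝ) ^ 2 - 1)) := by
  obtain ⟨h1, h2, h3, h4⟩ := hR
  -- basic J facts
  have hadj : ∀ a b : V, ⟪a, J b⟫ = -⟪J a, b⟫ := by
    intro a b
    have h := hJorth a (J b)
    rw [hJ2 b] at h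
    rw [← h]
    simp [inner_neg_right]
  have hJv0 : ∀ v : V, ⟪v, J v⟫ = 0 := by
    intro v
    have h := hadj v v
    have h2' : ⟪J v, v⟫ = ⟪v, J v⟫ := real_inner_comm _ _
    linarith
  -- R vanishing on repeated arguments
  have hz1 : ∀ a c d : V, R a a c d = 0 := by
    intro a c d; have := h1 a a c d; linarith
  have hz2 : ∀ a b c : V, R a b c c = 0 := by
    intro a b c; have := h2 a b c c; linarith
  -- L1 : scaled constant antiholomorphic curvature
  have L1 : ∀ a b : V, ⟪a, b⟫ = 0 → ⟪b, J a⟫ = 0 →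
      R a b b a = ν * (⟪a, a⟫ * ⟪b, b⟫) := by
    intro a b hab hbJa
    by_cases ha : a = 0
    · subst ha; simp
    by_cases hb : b = 0
    · subst hb; simp
    have hna : ‖a‖ ≠ 0 := norm_ne_zero_iff.mpr ha
    have hnb : ‖b‖ ≠ 0 := norm_ne_zero_iff.mpr hb
    have key := hν (‖a‖⁻¹ • a) (‖b‖⁻¹ • b) (norm_smul_inv_norm ha) (norm_smul_inv_norm hb)
      (by rw [real_inner_smul_left, real_inner_smul_right, hab]; ring)
      (by rw [map_smul, real_inner_smul_left, real_inner_smul_right, hbJa]; ring)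
    simp only [map_smul, LinearMap.smul_apply, smul_eq_mul] at key
    rw [real_inner_self_eq_norm_mul_norm, real_inner_self_eq_norm_mul_norm]
    field_simp at key
    linear_combination key
  -- L2 : polarization in the second argument
  have L2 : ∀ a b c : V, ⟪a, b⟫ = 0 → ⟪b, J a⟫ = 0 → ⟪a, c⟫ = 0 → ⟪c, J a⟫ = 0 →
      R a b c a + R a c b a = 2 * ν * ⟪a, a⟫ * ⟪b, c⟫ := by
    intro a b c hab hbJ hac hcJ
    have k1 := L1 a b hab hbJ
    have k2 := L1 a c hac hcJ
    have k3 := L1 a (b + c) (by rw [inner_add_right, hab, hac]; ring)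
      (by rw [inner_add_left, hbJ, hcJ]; ring)
    simp only [map_add, LinearMap.add_apply, inner_add_left, inner_add_right] at k3
    linear_combination k3 - k1 - k2 - ν * ⟪a, a⟫ * (real_inner_comm c b)
  -- L3 : polarization in the first argument
  have L3 : ∀ a d b c : V, ⟪a, b⟫ = 0 → ⟪b, J a⟫ = 0 → ⟪a, c⟫ = 0 → ⟪c, J a⟫ = 0 →
      ⟪d, b⟫ = 0 → ⟪b, J d⟫ = 0 → ⟪d, c⟫ = 0 → ⟪c, J d⟫ = 0 →
      R a b c d + R d b c a + R a c b d + R d c b a = 4 * ν * ⟪a, d⟫ * ⟪b, c⟫ := by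
    intro a d b c hab hbJa hac hcJa hdb hbJd hdc hcJd
    have k1 := L2 a b c hab hbJa hac hcJa
    have k2 := L2 d b c hdb hbJd hdc hcJd
    have k3 := L2 (a + d) b c
      (by rw [inner_add_left, hab, hdb]; ring)
      (by rw [map_add, inner_add_right, hbJa, hbJd]; ring)
      (by rw [inner_add_left, hac, hdc]; ring)
      (by rw [map_add, inner_add_right, hcJa, hcJd]; ring)
    simp only [map_add, LinearMap.add_apply, inner_add_left, inner_add_right] at k3
    linear_combination k3 - k1 - k2 - 2 * ν * ⟪b, c⟫ * (real_inner_comm d a)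
  -- helper : unit vector from inner product
  have norm_one : ∀ w : V, ⟪w, w⟫ = 1 → ‖w‖ = 1 := by
    intro w hw
    rw [real_inner_self_eq_norm_mul_norm] at hw
    rcases mul_self_eq_one_iff.mp hw with h' | h'
    · exact h'
    · linarith [norm_nonneg w]
  -- pointwise consequences for an antiholomorphic orthonormal pair
  have block : ∀ u v : V, ⟪u, u⟫ = 1 → ⟪v, v⟫ = 1 → ⟪u, v⟫ = 0 → ⟪u, J v⟫ = 0 →
      ⟪v, J u⟫ = 0 →
      (R u v v u = ν ∧ R u (J v) (J v) u = ν ∧ R (J u) v v (J u) = ν ∧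
        R (J u) (J v) (J v) (J u) = ν) ∧
      (R u (J v) v (J u) = - R u v (J v) (J u) ∧
        R u (J u) v (J v) = -2 * R u v (J v) (J u) ∧
        R u v (J v) (J u) = R (J u) (J v) v u ∧
        R (J u) v (J v) u = R u (J v) v (J u)) ∧
      (R u (J u) (J u) u + R v (J v) (J v) v + 3 * R u (J u) v (J v) = 2 * ν) := by
    intro u v huu hvv huv huJv hvJu
    have hvu : ⟪v, u⟫ = 0 := by rw [real_inner_comm]; exact huv
    have hun : ‖u‖ = 1 := norm_one u huu
    have hvn : ‖v‖ = 1 := norm_one v hvv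
    have hJuJu : ⟪J u, J u⟫ = 1 := by rw [hJorth]; exact huu
    have hJvJv : ⟪J v, J v⟫ = 1 := by rw [hJorth]; exact hvv
    have hJun : ‖J u‖ = 1 := norm_one _ hJuJu
    have hJvn : ‖J v‖ = 1 := norm_one _ hJvJv
    have hJuv : ⟪J u, v⟫ = 0 := by rw [real_inner_comm]; exact hvJu
    have hJvu : ⟪J v, u⟫ = 0 := by rw [real_inner_comm]; exact huJv
    have hJuJv : ⟪J u, J v⟫ = 0 := by rw [hJorth]; exact huv
    have hJvJu : ⟪J v, J u⟫ = 0 := by rw [hJorth]; exact hvu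
    have hvJJu : ⟪v, J (J u)⟫ = 0 := by rw [hJ2]; simp [inner_neg_right, hvu]
    have hJvJJu : ⟪J v, J (J u)⟫ = 0 := by rw [hJ2]; simp [inner_neg_right, hJvu]
    have hJvv : ⟪J v, v⟫ = 0 := by rw [real_inner_comm]; exact hJv0 v
    have hJuu : ⟪J u, u⟫ = 0 := by rw [real_inner_comm]; exact hJv0 u
    have c1 : R u v v u = ν := hν u v hun hvn huv hvJu
    have c2 : R u (J v) (J v) u = ν := hν u (J v) hun hJvn huJv hJvJu
    have c3 : R (J u) v v (J u) = ν := hν (J u) v hJun hvn hJuv hvJJu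
    have c4 : R (J u) (J v) (J v) (J u) = ν := hν (J u) (J v) hJun hJvn hJuJv hJvJJu
    have l3inst := L3 u (J u) v (J v) huv hvJu huJv hJvJu hJuv hvJJu hJuJv hJvJJu
    have s1 : R u (J v) v (J u) = R (J u) v (J v) u := by
      have h := hRJ u (J v) v (J u)
      rw [hJ2 v, hJ2 u] at h
      simpa using h
    have s2 : R u v (J v) (J u) = R (J u) (J v) v u := by
      have h := hRJ u v (J v) (J u)
      rw [hJ2 v, hJ2 u] at h
      simpa using h
    have c5 : R u (J v) v (J u) = - R u v (J v) (J u) := by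
      linear_combination (l3inst + s1 + s2) / 2 + 2 * ν * ⟪v, J v⟫ * (hJv0 u)
    have bianchi1 := h4 u v (J v) (J u)
    have s3 : R (J v) u v (J u) = R v (J u) (J v) u := by
      have h := hRJ (J v) u v (J u)
      rw [hJ2 v, hJ2 u] at h
      have hneg : R (-v) = R ((-1:ℝ) • v) := by rw [neg_one_smul]
      rw [hneg, map_smul] at h
      simpa using h
    have s4 := h1 v (J u) (J v) u
    have s5 := h3 u (J u) v (J v)
    have c6 : R u (J u) v (J v) = -2 * R u v (J v) (J u) := by
      linear_combination bianchi1 - s3 - s4 + s5 + c5 - s1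
    have bianchi2 := h4 u v (J u) (J v)
    have s6 : R v (J u) u (J v) = R (J v) u (J u) v := by
      have h := hRJ v (J u) u (J v)
      rw [hJ2 u, hJ2 v] at h
      simpa using h
    have s7 := h3 (J v) u (J u) v
    have s8 := h1 (J u) u v (J v)
    have hG : R u v (J u) (J v) = - R u v (J v) (J u) := by
      linear_combination bianchi2 - s6 - s7 - s8 + c6 - c5 + s1
    have a1 : R (J v) (J u) (J u) (J v) = ν := by
      refine hν (J v) (J u) hJvn hJun hJvJu ?_
      rw [hJ2]; simp [inner_neg_right, hJuv]
    have a2 : R (J v) v v (J v) = R v (J v) (J v) v := by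
      linear_combination h1 (J v) v v (J v) - h2 v (J v) v (J v)
    have a3 : R (J v) v (J u) u = R u (J u) v (J v) := by
      linear_combination h3 (J v) v (J u) u + h1 (J u) u (J v) v - h2 u (J u) (J v) v
    have a4 : R (J v) (J u) v u = R u v (J u) (J v) := by
      linear_combination h3 (J v) (J u) v u + h1 v u (J v) (J u) - h2 u v (J v) (J u)
    have hpq : ⟪u + J v, v + J u⟫ = 0 := by
      simp [inner_add_left, inner_add_right, huv, hJv0 u, hJvv, hJvJu]
    have hqJp : ⟪v + J u, J (u + J v)⟫ = 0 := by
      rw [map_add, hJ2]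
      simp [-inner_self_eq_norm_sq_to_K, inner_add_left, inner_add_right, inner_neg_right, hvJu, hJuv, hJuJu, hvv]
    have hpp : ⟪u + J v, u + J v⟫ = 2 := by
      simp [-inner_self_eq_norm_sq_to_K, inner_add_left, inner_add_right, huu, hJvJv, huJv, hJvu]
      norm_num
    have hqq : ⟪v + J u, v + J u⟫ = 2 := by
      simp [-inner_self_eq_norm_sq_to_K, inner_add_left, inner_add_right, hvv, hJuJu, hvJu, hJuv]
      norm_num
    have kp := L1 (u + J v) (v + J u) hpq hqJp
    rw [hpp, hqq] at kp
    simp only [map_add, LinearMap.add_apply] at kp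
    have hpq' : ⟪u - J v, v - J u⟫ = 0 := by
      simp [inner_sub_left, inner_sub_right, huv, hJv0 u, hJvv, hJvJu]
    have hqJp' : ⟪v - J u, J (u - J v)⟫ = 0 := by
      rw [map_sub, hJ2]
      simp [-inner_self_eq_norm_sq_to_K, inner_sub_left, inner_sub_right, inner_add_left, inner_add_right, inner_neg_right,
        hvJu, hJuv, hJuJu, hvv]
    have hpp' : ⟪u - J v, u - J v⟫ = 2 := by
      simp [-inner_self_eq_norm_sq_to_K, inner_sub_left, inner_sub_right, huu, hJvJv, huJv, hJvu]
      norm_num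
    have hqq' : ⟪v - J u, v - J u⟫ = 2 := by
      simp [-inner_self_eq_norm_sq_to_K, inner_sub_left, inner_sub_right, hvv, hJuJu, hvJu, hJuv]
      norm_num
    have km := L1 (u - J v) (v - J u) hpq' hqJp'
    rw [hpp', hqq'] at km
    simp only [map_sub, LinearMap.sub_apply] at km
    rw [sub_eq_add_neg u (J v), ← neg_one_smul ℝ (J v)] at km
    simp only [map_add, map_smul, LinearMap.add_apply, LinearMap.smul_apply, smul_eq_mul] at km
    have s9 : R (J u) v (J v) u = R u (J v) v (J u) := by
      have h := hRJ (J u) v (J v) u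
      rw [hJ2 u, hJ2 v] at h
      have hneg : R (-u) = R ((-1:ℝ) • u) := by rw [neg_one_smul]
      rw [hneg, map_smul] at h
      simpa using h
    refine ⟨⟨c1, c2, c3, c4⟩, ⟨c5, c6, s2, s9⟩, ?_⟩
    linarith [kp, km, c1, a1, a2, a3, a4, hG, c6]
  -- adapted orthonormal family
  obtain ⟨x, hx1, hx2⟩ := exists_adapted_family n J hJ2 hJorth hdim
  have hxd : ∀ k, ⟪x k, x k⟫ = 1 := by intro k; have := hx1 k k; simpa using this
  haveI : Nonempty (Fin n ⊕ Fin n) := ⟨Sum.inl ⟨0, by omega⟩⟩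
  set s : Fin n ⊕ Fin n → V := Sum.elim x (fun k => J (x k)) with hs_def
  have horth : Orthonormal ℝ s := by
    rw [orthonormal_iff_ite]
    rintro (k | k) (l | l)
    · simp only [hs_def, Sum.elim_inl, Sum.inl.injEq]
      rw [hx1 k l]
    · simp only [hs_def, Sum.elim_inl, Sum.elim_inr]
      rw [hx2 k l]
      simp
    · simp only [hs_def, Sum.elim_inl, Sum.elim_inr]
      rw [real_inner_comm, hx2 l k]
      simp
    · simp only [hs_def, Sum.elim_inr, Sum.inr.injEq]
      rw [hJorth, hx1 k l]
  have hcard : Fintype.card (Fin n ⊕ Fin n) = Module.finrank ℝ V := by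
    simp only [Fintype.card_sum, Fintype.card_fin, hdim]
    omega
  set bb : Module.Basis (Fin n ⊕ Fin n) ℝ V :=
    basisOfLinearIndependentOfCardEqFinrank horth.linearIndependent hcard with hbb_def
  have hbb : ⇑bb = s := by
    rw [hbb_def]
    exact coe_basisOfLinearIndependentOfCardEqFinrank _ _
  set g : OrthonormalBasis (Fin n ⊕ Fin n) ℝ V :=
    bb.toOrthonormalBasis (by rw [hbb]; exact horth) with hg_def
  have hco : ⇑g = s := by
    rw [hg_def, Module.Basis.coe_toOrthonormalBasis, hbb]
  have hgl : ∀ k, g (Sum.inl k) = x k := by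
    intro k
    rw [congrFun hco (Sum.inl k)]
    rfl
  have hgr : ∀ k, g (Sum.inr k) = J (x k) := by
    intro k
    rw [congrFun hco (Sum.inr k)]
    rfl
  -- basis change for the traces
  have key1 : ∀ a b : V, (∑ i, R a (e i) (e i) b)
      = ∑ i : Fin n ⊕ Fin n, R a (g i) (g i) b := by
    intro a b
    have h := sum_diag_eq_aux e g (LinearMap.mk₂ ℝ (fun z w => R a z w b)
      (fun m1 m2 n' => by simp) (fun c m n' => by simp) (fun m n1 n2 => by simp)
      (fun c m n' => by simp))
    simpa using h
  have key2 : ∀ a b : V, (∑ i, R a (e i) (J (e i)) (J b))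
      = ∑ i : Fin n ⊕ Fin n, R a (g i) (J (g i)) (J b) := by
    intro a b
    have h := sum_diag_eq_aux e g (LinearMap.mk₂ ℝ (fun z w => R a z (J w) (J b))
      (fun m1 m2 n' => by simp) (fun c m n' => by simp) (fun m n1 n2 => by simp)
      (fun c m n' => by simp))
    simpa using h
  have hτg : τ = ∑ i : Fin n ⊕ Fin n, ∑ j : Fin n ⊕ Fin n, R (g i) (g j) (g j) (g i) := by
    rw [hτ]
    have step1 : ∀ i, S (e i) (e i) = ∑ j : Fin n ⊕ Fin n, R (e i) (g j) (g j) (e i) := by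
      intro i
      rw [hS]
      exact key1 _ _
    simp_rw [step1]
    have h := sum_diag_eq_aux e g (LinearMap.mk₂ ℝ
      (fun a b => ∑ j : Fin n ⊕ Fin n, R a (g j) (g j) b)
      (fun m1 m2 n' => by
        simp only [map_add, LinearMap.add_apply, Finset.sum_add_distrib])
      (fun c m n' => by
        simp only [map_smul, LinearMap.smul_apply, smul_eq_mul, Finset.mul_sum])
      (fun m n1 n2 => by
        simp only [map_add, LinearMap.add_apply, Finset.sum_add_distrib])
      (fun c m n' => by
        simp only [map_smul, LinearMap.smul_apply, smul_eq_mul, Finset.mul_sum]))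
    simpa using h
  have hτ'g : τ' = ∑ i : Fin n ⊕ Fin n, ∑ j : Fin n ⊕ Fin n,
      R (g i) (g j) (J (g j)) (J (g i)) := by
    rw [hτ']
    have step1 : ∀ i, S' (e i) (e i) = ∑ j : Fin n ⊕ Fin n, R (e i) (g j) (J (g j)) (J (e i)) := by
      intro i
      rw [hS']
      exact key2 _ _
    simp_rw [step1]
    have h := sum_diag_eq_aux e g (LinearMap.mk₂ ℝ
      (fun a b => ∑ j : Fin n ⊕ Fin n, R a (g j) (J (g j)) (J b))
      (fun m1 m2 n' => by
        simp only [map_add, LinearMap.add_apply, Finset.sum_add_distrib])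
      (fun c m n' => by
        simp only [map_smul, LinearMap.smul_apply, smul_eq_mul, Finset.mul_sum])
      (fun m n1 n2 => by
        simp only [map_add, LinearMap.add_apply, Finset.sum_add_distrib])
      (fun c m n' => by
        simp only [map_smul, LinearMap.smul_apply, smul_eq_mul, Finset.mul_sum]))
    simpa using h
  -- expanding a double sum over the sum type
  have expand : ∀ (F : V → V → ℝ),
      (∑ i : Fin n ⊕ Fin n, ∑ j : Fin n ⊕ Fin n, F (g i) (g j))
      = ∑ k, ∑ l, (F (x k) (x l) + F (x k) (J (x l))
          + F (J (x k)) (x l) + F (J (x k)) (J (x l))) := by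
    intro F
    have inner1 : ∀ w : V, (∑ j : Fin n ⊕ Fin n, F w (g j))
        = ∑ l, (F w (x l) + F w (J (x l))) := by
      intro w
      rw [Fintype.sum_sum_type, ← Finset.sum_add_distrib]
      refine Finset.sum_congr rfl fun l _ => ?_
      rw [hgl, hgr]
    rw [Fintype.sum_sum_type, ← Finset.sum_add_distrib]
    refine Finset.sum_congr rfl fun k _ => ?_
    rw [inner1, inner1, hgl, hgr, ← Finset.sum_add_distrib]
    refine Finset.sum_congr rfl fun l _ => ?_
    ring
  have hτkl : τ = ∑ k, ∑ l, (R (x k) (x l) (x l) (x k)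
      + R (x k) (J (x l)) (J (x l)) (x k)
      + R (J (x k)) (x l) (x l) (J (x k))
      + R (J (x k)) (J (x l)) (J (x l)) (J (x k))) := by
    rw [hτg]
    exact expand (fun a b => R a b b a)
  have hτ'kl : τ' = ∑ k, ∑ l, (R (x k) (x l) (J (x l)) (J (x k))
      + R (x k) (J (x l)) (J (J (x l))) (J (x k))
      + R (J (x k)) (x l) (J (x l)) (J (J (x k)))
      + R (J (x k)) (J (x l)) (J (J (x l))) (J (J (x k)))) := by
    rw [hτ'g]
    exact expand (fun a b => R a b (J b) (J a))
  -- block applied to adapted pairs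
  have hblockkl := fun (k l : Fin n) (hkl : k ≠ l) =>
    block (x k) (x l) (hxd k) (hxd l)
      (by have := hx1 k l; rw [if_neg hkl] at this; exact this)
      (hx2 k l) (hx2 l k)
  set σ : ℝ := ∑ k, R (x k) (J (x k)) (J (x k)) (x k) with hσ_def
  set SA : ℝ := ∑ k, ∑ l, (if k = l then 0 else R (x k) (x l) (J (x l)) (J (x k))) with hSA_def
  have hval1 : ∀ k l, (R (x k) (x l) (x l) (x k)
      + R (x k) (J (x l)) (J (x l)) (x k)
      + R (J (x k)) (x l) (x l) (J (x k))
      + R (J (x k)) (J (x l)) (J (x l)) (J (x k)))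
      = if k = l then 2 * R (x k) (J (x k)) (J (x k)) (x k) else 4 * ν := by
    intro k l
    by_cases hkl : k = l
    · subst hkl
      rw [if_pos rfl]
      have e1 : R (x k) (x k) (x k) (x k) = 0 := hz1 _ _ _
      have e2 : R (J (x k)) (J (x k)) (J (x k)) (J (x k)) = 0 := hz1 _ _ _
      have e3 := h3 (J (x k)) (x k) (x k) (J (x k))
      linarith
    · rw [if_neg hkl]
      obtain ⟨⟨c1, c2, c3, c4⟩, -, -⟩ := hblockkl k l hkl
      linarith
  have hval2 : ∀ k l, (R (x k) (x l) (J (x l)) (J (x k))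
      + R (x k) (J (x l)) (J (J (x l))) (J (x k))
      + R (J (x k)) (x l) (J (x l)) (J (J (x k)))
      + R (J (x k)) (J (x l)) (J (J (x l))) (J (J (x k))))
      = if k = l then 2 * R (x k) (J (x k)) (J (x k)) (x k)
        else 4 * R (x k) (x l) (J (x l)) (J (x k)) := by
    intro k l
    rw [hJ2 (x l), hJ2 (x k)]
    simp only [map_neg, LinearMap.neg_apply]
    by_cases hkl : k = l
    · subst hkl
      rw [if_pos rfl]
      have e1 : R (x k) (x k) (J (x k)) (J (x k)) = 0 := hz1 _ _ _
      have e2 := h2 (x k) (J (x k)) (x k) (J (x k))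
      have e3 := h1 (J (x k)) (x k) (J (x k)) (x k)
      have e4 : R (J (x k)) (J (x k)) (x k) (x k) = 0 := hz1 _ _ _
      linarith
    · rw [if_neg hkl]
      obtain ⟨-, ⟨c5, c6, s2, s9⟩, -⟩ := hblockkl k l hkl
      linarith
  have hτval : τ = 2 * σ + 4 * (n:ℝ) * ((n:ℝ) - 1) * ν := by
    rw [hτkl]
    have hrow : ∀ k, (∑ l, ((if k = l then 2 * R (x k) (J (x k)) (J (x k)) (x k) else 4 * ν)))
        = 2 * R (x k) (J (x k)) (J (x k)) (x k) + ((n:ℝ) - 1) * (4 * ν) := by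
      intro k
      have hsplit : ∀ l, ((if k = l then 2 * R (x k) (J (x k)) (J (x k)) (x k) else 4 * ν))
          = (if k = l then 2 * R (x k) (J (x k)) (J (x k)) (x k) - 4 * ν else 0) + 4 * ν := by
        intro l
        split <;> ring
      simp_rw [hsplit]
      rw [Finset.sum_add_distrib, Fintype.sum_ite_eq, Finset.sum_const, Finset.card_univ,
        Fintype.card_fin]
      push_cast
      ring
    simp_rw [hval1, hrow]
    rw [Finset.sum_add_distrib, Finset.sum_const, Finset.card_univ, Fintype.card_fin,
      ← Finset.mul_sum]
    push_cast
    rw [hσ_def]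
    ring
  have hτ'val : τ' = 2 * σ + 4 * SA := by
    rw [hτ'kl]
    have hsplit : ∀ k l, ((if k = l then 2 * R (x k) (J (x k)) (J (x k)) (x k)
          else 4 * R (x k) (x l) (J (x l)) (J (x k))))
        = (if k = l then 2 * R (x k) (J (x k)) (J (x k)) (x k) else 0)
          + 4 * (if k = l then 0 else R (x k) (x l) (J (x l)) (J (x k))) := by
      intro k l
      split <;> ring
    simp_rw [hval2, hsplit]
    simp_rw [Finset.sum_add_distrib]
    congr 1
    · have hrow2 : ∀ k, (∑ l, (if k = l then 2 * R (x k) (J (x k)) (J (x k)) (x k) else (0:ℝ)))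
          = 2 * R (x k) (J (x k)) (J (x k)) (x k) := fun k => Fintype.sum_ite_eq k _
      simp_rw [hrow2]
      rw [hσ_def, Finset.mul_sum]
    · rw [hSA_def, Finset.mul_sum]
      refine Finset.sum_congr rfl fun k _ => ?_
      rw [Finset.mul_sum]
  -- the key extra relation from the ★★ identity
  have hstar : 2 * ((n:ℝ) - 1) * σ - 6 * SA = 2 * (n:ℝ) * ((n:ℝ) - 1) * ν := by
    have hper : ∀ k l, (if k = l then (0:ℝ)
        else R (x k) (J (x k)) (J (x k)) (x k) + R (x l) (J (x l)) (J (x l)) (x l)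
          + 3 * R (x k) (J (x k)) (x l) (J (x l)))
        = if k = l then 0 else 2 * ν := by
      intro k l
      by_cases hkl : k = l
      · simp [hkl]
      · rw [if_neg hkl, if_neg hkl]
        obtain ⟨-, -, c7⟩ := hblockkl k l hkl
        linarith
    have hsum : (∑ k, ∑ l, (if k = l then (0:ℝ)
        else R (x k) (J (x k)) (J (x k)) (x k) + R (x l) (J (x l)) (J (x l)) (x l)
          + 3 * R (x k) (J (x k)) (x l) (J (x l))))
        = ∑ k, ∑ l, (if k = l then (0:ℝ) else 2 * ν) :=
      Finset.sum_congr rfl fun k _ => Finset.sum_congr rfl fun l _ => hper k l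
    -- RHS value
    have hrhs : (∑ k : Fin n, ∑ l : Fin n, (if k = l then (0:ℝ) else 2 * ν))
        = (n:ℝ) * ((n:ℝ) - 1) * (2 * ν) := by
      have hrow : ∀ k : Fin n, (∑ l, (if k = l then (0:ℝ) else 2 * ν))
          = ((n:ℝ) - 1) * (2 * ν) := by
        intro k
        have hsplit : ∀ l : Fin n, (if k = l then (0:ℝ) else 2 * ν)
            = (if k = l then -(2*ν) else 0) + 2 * ν := by
          intro l
          split <;> ring
        simp_rw [hsplit]
        rw [Finset.sum_add_distrib, Fintype.sum_ite_eq, Finset.sum_const, Finset.card_univ,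
          Fintype.card_fin]
        push_cast
        ring
      simp_rw [hrow]
      rw [Finset.sum_const, Finset.card_univ, Fintype.card_fin]
      push_cast
      ring
    -- LHS value
    have hlhs : (∑ k, ∑ l, (if k = l then (0:ℝ)
        else R (x k) (J (x k)) (J (x k)) (x k) + R (x l) (J (x l)) (J (x l)) (x l)
          + 3 * R (x k) (J (x k)) (x l) (J (x l))))
        = 2 * ((n:ℝ) - 1) * σ - 6 * SA := by
      have hsplit : ∀ k l, (if k = l then (0:ℝ)
          else R (x k) (J (x k)) (J (x k)) (x k) + R (x l) (J (x l)) (J (x l)) (x l)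
            + 3 * R (x k) (J (x k)) (x l) (J (x l)))
          = (R (x k) (J (x k)) (J (x k)) (x k)
              - (if k = l then R (x k) (J (x k)) (J (x k)) (x k) else 0))
            + (R (x l) (J (x l)) (J (x l)) (x l)
              - (if k = l then R (x l) (J (x l)) (J (x l)) (x l) else 0))
            + (-6) * (if k = l then 0 else R (x k) (x l) (J (x l)) (J (x k))) := by
        intro k l
        by_cases hkl : k = l
        · subst hkl; simp
        · rw [if_neg hkl, if_neg hkl, if_neg hkl, if_neg hkl]
          obtain ⟨-, ⟨-, c6, -, -⟩, -⟩ := hblockkl k l hkl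
          linarith
      have hrow : ∀ k, (∑ l, (if k = l then (0:ℝ)
          else R (x k) (J (x k)) (J (x k)) (x k) + R (x l) (J (x l)) (J (x l)) (x l)
            + 3 * R (x k) (J (x k)) (x l) (J (x l))))
          = ((n:ℝ) * R (x k) (J (x k)) (J (x k)) (x k)
              - R (x k) (J (x k)) (J (x k)) (x k))
            + (σ - R (x k) (J (x k)) (J (x k)) (x k))
            + (-6) * (∑ l, (if k = l then 0 else R (x k) (x l) (J (x l)) (J (x k)))) := by
        intro k
        simp_rw [hsplit k]
        rw [Finset.sum_add_distrib, Finset.sum_add_distrib, Finset.sum_sub_distrib,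
          Finset.sum_sub_distrib, Finset.sum_const, Finset.card_univ, Fintype.card_fin,
          Fintype.sum_ite_eq, Fintype.sum_ite_eq, ← Finset.mul_sum, ← hσ_def]
        push_cast
        ring
      simp_rw [hrow]
      rw [Finset.sum_add_distrib, Finset.sum_add_distrib, Finset.sum_sub_distrib,
        Finset.sum_sub_distrib, Finset.sum_const, Finset.card_univ, Fintype.card_fin,
        ← Finset.mul_sum, ← Finset.mul_sum, ← hσ_def, ← hSA_def]
      push_cast
      ring
    linarith [hsum, hrhs, hlhs]
  -- the endgame
  have h2n : (2:ℝ) ≤ (n:ℝ) := by exact_mod_cast hn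
  have hden : (8 * (n:ℝ) * ((n:ℝ)^2 - 1)) ≠ 0 := by nlinarith
  rw [eq_div_iff hden]
  linear_combination (-(2*(n:ℝ)+1)) * hτval + 3 * hτ'val - 2 * hstar
end

section
/- Let V be a real inner product space of dimension 2n (n ≥ 2) with an orthogonal complex structure J, and let R be a curvature-like tensor on V satisfying R(x,y,z,u) = R(Jx,Jy,Jz,Ju) for all x, y, z, u. If R has constant antiholomorphic sectional curvature ν, then R satisfies the identity R(x,y,z,u) = R(x,y,Jz,Ju) + R(x,Jy,z,Ju) + R(Jx,y,z,Ju) for all x, y, z, u ∈ V. -/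
open scoped RealInnerProductSpace

/-- The constant-curvature model tensor `(x,y,z,u) ↦ ⟪x,u⟫⟪y,z⟫ - ⟪x,z⟫⟪y,u⟫`. -/
noncomputable def constCurvTensor (V : Type*) [NormedAddCommGroup V]
    [InnerProductSpace ℝ V] : V →ₗ[ℝ] V →ₗ[ℝ] V →ₗ[ℝ] V →ₗ[ℝ] ℝ :=
  LinearMap.mk₂ ℝ
    (fun x y => LinearMap.mk₂ ℝ (fun z u => ⟪x,u⟫*⟪y,z⟫ - ⟪x,z⟫*⟪y,u⟫)
      (fun z z' u => by simp [inner_add_right]; ring)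
      (fun c z u => by simp [real_inner_smul_right]; ring)
      (fun z u u' => by simp [inner_add_right]; ring)
      (fun c z u => by simp [real_inner_smul_right]; ring))
    (fun x x' y => by
      refine LinearMap.ext fun z => LinearMap.ext fun u => ?_
      simp [inner_add_left]; ring)
    (fun c x y => by
      refine LinearMap.ext fun z => LinearMap.ext fun u => ?_
      simp [real_inner_smul_left]; ring)
    (fun x y y' => by
      refine LinearMap.ext fun z => LinearMap.ext fun u => ?_
      simp [inner_add_left]; ring)
    (fun c x y => by
      refine LinearMap.ext fun z => LinearMap.ext fun u => ?_
      simp [real_inner_smul_left]; ring)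

lemma constCurvTensor_apply {V : Type*} [NormedAddCommGroup V] [InnerProductSpace ℝ V]
    (x y z u : V) :
    constCurvTensor V x y z u = ⟪x,u⟫*⟪y,z⟫ - ⟪x,z⟫*⟪y,u⟫ := rfl

theorem aux_key {V : Type*} [NormedAddCommGroup V] [InnerProductSpace ℝ V]
    (J : V →ₗ[ℝ] V)
    (hJ2 : ∀ x : V, J (J x) = -x)
    (hJorth : ∀ x y : V, ⟪J x, J y⟫ = ⟪x, y⟫)
    (S : V →ₗ[ℝ] V →ₗ[ℝ] V →ₗ[ℝ] V →ₗ[ℝ] ℝ)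
    (h1 : ∀ x y z u : V, S x y z u = - S y x z u)
    (h2 : ∀ x y z u : V, S x y z u = - S x y u z)
    (h3 : ∀ x y z u : V, S x y z u = S z u x y)
    (h4 : ∀ x y z u : V, S x y z u + S y z x u + S z x y u = 0)
    (hSJ : ∀ x y z u : V, S x y z u = S (J x) (J y) (J z) (J u))
    (hA : ∀ x y : V, ⟪x, y⟫ = 0 → ⟪J x, y⟫ = 0 → S x y y x = 0) :
    ∀ x y z u : V,
      S x y z u = S x y (J z) (J u) + S x (J y) z (J u) + S (J x) y z (J u) := by
  have hJ0 : ∀ x : V, ⟪x, J x⟫ = 0 := by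
    intro x
    have h := hJorth x (J x)
    rw [hJ2, inner_neg_right] at h
    have h' : ⟪J x, x⟫ = ⟪x, J x⟫ := real_inner_comm _ _
    linarith [h, h']
  have hmixJ : ∀ a b : V, ⟪J a, b⟫ = -⟪a, J b⟫ := by
    intro a b
    have h := hJorth a (J b)
    rw [hJ2, inner_neg_right] at h
    linarith
  have hJ34 : ∀ a b c d : V, S a b (J c) (J d) = S (J a) (J b) c d := by
    intro a b c d
    have h := hSJ a b (J c) (J d)
    rw [hJ2, hJ2] at h
    simpa [map_neg, LinearMap.neg_apply] using h
  have hJ24 : ∀ a b c d : V, S a (J b) c (J d) = S (J a) b (J c) d := by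
    intro a b c d
    have h := hSJ a (J b) c (J d)
    rw [hJ2, hJ2] at h
    simpa [map_neg, LinearMap.neg_apply] using h
  have hJ23 : ∀ a b c d : V, S a (J b) (J c) d = S (J a) b c (J d) := by
    intro a b c d
    have h := hSJ a (J b) (J c) d
    rw [hJ2, hJ2] at h
    simpa [map_neg, LinearMap.neg_apply] using h
  have hneg : ∀ a b c d : V, S (-a) b c d = -S a b c d := by
    intro a b c d
    have e1 := h3 (-a) b c d
    have e2 := h2 c d (-a) b
    have e3 : S c d b (-a) = -S c d b a := map_neg _ _
    have e4 := h2 c d b a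
    have e5 := h3 a b c d
    linarith
  have hJ13 : ∀ a b c d : V, S (J a) b (J c) d = S a (J b) c (J d) := by
    intro a b c d
    have h := hSJ (J a) b (J c) d
    rw [hJ2, hJ2] at h
    simpa [map_neg, LinearMap.neg_apply, LinearMap.map_neg] using (by simpa [hneg] using h)
  have hJ14 : ∀ a b c d : V, S (J a) b c (J d) = S a (J b) (J c) d := by
    intro a b c d
    have h := hSJ (J a) b c (J d)
    rw [hJ2, hJ2] at h
    simpa [map_neg, LinearMap.neg_apply, LinearMap.map_neg] using (by simpa [hneg] using h)
  have hL1 : ∀ x y z : V, ⟪x, y⟫ = 0 → ⟪J x, y⟫ = 0 → ⟪x, z⟫ = 0 → ⟪J x, z⟫ = 0 →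
      S x y z x = 0 := by
    intro x y z hy hy' hz hz'
    have e := hA x (y + z) (by rw [inner_add_right, hy, hz]; ring)
      (by rw [inner_add_right, hy', hz']; ring)
    simp only [map_add, LinearMap.add_apply] at e
    have h0y := hA x y hy hy'
    have h0z := hA x z hz hz'
    have sym : S x z y x = S x y z x := by
      linarith [h3 x z y x, h1 y x x z, h2 x y x z]
    linarith
  have hL4 : ∀ x y z : V, ⟪x, y⟫ = 0 → ⟪J x, y⟫ = 0 → ⟪x, z⟫ = 0 → ⟪J x, z⟫ = 0 →
      S x y z (J x) = - S x z y (J x) := by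
    intro x y z hy hy' hz hz'
    have hy2 : ⟪x + J x, y⟫ = 0 := by rw [inner_add_left, hy, hy']; ring
    have hy2' : ⟪J (x + J x), y⟫ = 0 := by
      rw [map_add, hJ2, inner_add_left, inner_neg_left, hy, hy']; ring
    have hz2 : ⟪x + J x, z⟫ = 0 := by rw [inner_add_left, hz, hz']; ring
    have hz2' : ⟪J (x + J x), z⟫ = 0 := by
      rw [map_add, hJ2, inner_add_left, inner_neg_left, hz, hz']; ring
    have e := hL1 (x + J x) y z hy2 hy2' hz2 hz2'
    simp only [map_add, LinearMap.add_apply] at e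
    have e1 := hL1 x y z hy hy' hz hz'
    have hJy' : ⟪J (J x), y⟫ = 0 := by rw [hJ2, inner_neg_left, hy]; ring
    have hJz' : ⟪J (J x), z⟫ = 0 := by rw [hJ2, inner_neg_left, hz]; ring
    have e2 := hL1 (J x) y z hy' hJy' hz' hJz'
    have chain : S (J x) y z x = S x z y (J x) := by
      linarith [h3 (J x) y z x, h1 z x (J x) y, h2 x z (J x) y]
    linarith
  -- the defect tensor T
  obtain ⟨T, hT⟩ : ∃ T : V → V → V → V → ℝ, ∀ x y z u : V,
      T x y z u =
        S x y z u - S x y (J z) (J u) - S x (J y) z (J u) - S (J x) y z (J u) :=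
    ⟨_, fun _ _ _ _ => rfl⟩
  have T0 : ∀ x y z u : V, T y x z u = -T x y z u := by
    intro x y z u
    simp only [hT]
    linarith [h1 x y z u, h1 x y (J z) (J u), h1 y (J x) z (J u), h1 (J y) x z (J u),
      h1 x (J y) z (J u), h1 (J x) y z (J u)]
  have T1 : ∀ x y z u : V, T x y u z = -T x y z u := by
    intro x y z u
    simp only [hT]
    linarith [h2 x y z u, h2 x y (J z) (J u), hJ24 x y u z, h2 (J x) y z (J u),
      hJ14 x y u z, h2 x (J y) z (J u)]
  have T2 : ∀ x y z u : V, T z u x y = T x y z u := by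
    intro x y z u
    simp only [hT]
    linarith [h3 x y z u, hJ34 z u x y, h3 x y (J z) (J u), h3 x (J y) z (J u),
      h3 (J z) u x (J y), hJ23 x y z u]
  have T3 : ∀ x y z u : V, T x y (J z) (J u) = -T x y z u := by
    intro x y z u
    simp only [hT, hJ2, map_neg, LinearMap.neg_apply, neg_neg]
    linarith [hJ23 x y z u, hJ13 x y z u]
  have T4 : ∀ x y z u : V, T x y z u + T y z x u + T z x y u = 0 := by
    intro x y z u
    simp only [hT]
    linarith [h4 x y z u, h4 x y (J z) (J u), h4 y z (J x) (J u), h4 z x (J y) (J u)]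
  have Tadd1 : ∀ a a' b c d : V, T (a + a') b c d = T a b c d + T a' b c d := by
    intro a a' b c d; simp only [hT, map_add, LinearMap.add_apply]; ring
  have Tadd2 : ∀ a b b' c d : V, T a (b + b') c d = T a b c d + T a b' c d := by
    intro a b b' c d; simp only [hT, map_add, LinearMap.add_apply]; ring
  have Tadd3 : ∀ a b c c' d : V, T a b (c + c') d = T a b c d + T a b c' d := by
    intro a b c c' d; simp only [hT, map_add, LinearMap.add_apply]; ring
  have Tadd4 : ∀ a b c d d' : V, T a b c (d + d') = T a b c d + T a b c d' := by
    intro a b c d d'; simp only [hT, map_add, LinearMap.add_apply]; ring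
  have Tsmul2 : ∀ (r : ℝ) (a b c d : V), T a (r • b) c d = r * T a b c d := by
    intro r a b c d; simp only [hT, map_smul, LinearMap.smul_apply, smul_eq_mul]; ring
  have Tsmul3 : ∀ (r : ℝ) (a b c d : V), T a b (r • c) d = r * T a b c d := by
    intro r a b c d; simp only [hT, map_smul, LinearMap.smul_apply, smul_eq_mul]; ring
  have Tneg3 : ∀ a b c d : V, T a b (-c) d = -T a b c d := by
    intro a b c d; simp only [hT, map_neg, LinearMap.neg_apply]; ring
  have Tneg4 : ∀ a b c d : V, T a b c (-d) = -T a b c d := by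
    intro a b c d; simp only [hT, map_neg, LinearMap.neg_apply]; ring
  have Tzero1 : ∀ b c d : V, T 0 b c d = 0 := by
    intro b c d; simp only [hT, map_zero, LinearMap.zero_apply]; ring
  -- basic vanishing
  have Txx : ∀ x z u : V, T x x z u = 0 := by
    intro x z u; linarith [T0 x x z u]
  have Tcc : ∀ a b c : V, T a b c c = 0 := by
    intro a b c; linarith [T1 a b c c]
  have Tsym23end : ∀ x y z : V, T x y z x = T x z y x := by
    intro x y z
    linarith [T2 y x x z, T0 x y x z, T1 x y z x]
  -- T(x, Jx, Jx, x) = 0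
  have T7 : ∀ x : V, T x (J x) (J x) x = 0 := by
    intro x
    have h := T3 x (J x) x (-(J x))
    simp only [map_neg, hJ2, neg_neg] at h
    rw [Tneg4] at h
    linarith [T1 x (J x) (J x) x, h]
  -- T(x, Jx, p, x) = 0
  have T8 : ∀ x p : V, T x (J x) p x = 0 := by
    intro x p
    have s1 := T2 x (J x) p x   -- T p x x (J x) = T x (J x) p x
    have s2 := T3 p x (-(J x)) x  -- T p x (J (-(J x))) (J x) = -T p x (-(J x)) x
    simp only [map_neg, hJ2, neg_neg] at s2
    rw [Tneg3] at s2
    have s3 := T2 (J x) x p x   -- T p x (J x) x = T (J x) x p x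
    have s4 := T0 x (J x) p x   -- T (J x) x p x = -T x (J x) p x
    linarith
  -- T(x, p, p, x) = 0 for antiholomorphic (x, p)
  have T9 : ∀ x p : V, ⟪x, p⟫ = 0 → ⟪J x, p⟫ = 0 → T x p p x = 0 := by
    intro x p h h'
    have e1 := hA x p h h'
    have e2 := hA (J x) p h' (by rw [hJ2, inner_neg_left, h]; ring)
    have hxJp : ⟪x, J p⟫ = 0 := by
      have := hmixJ x p; linarith
    have hJxJp : ⟪J x, J p⟫ = 0 := by rw [hJorth, h]
    have e3 := hL4 x (J p) p hxJp hJxJp h h'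
    simp only [hT]
    linarith
  -- T(x,y,y,x) = 0 for all x, y
  have T10 : ∀ x y : V, T x y y x = 0 := by
    intro x y
    by_cases hx : x = 0
    · subst hx; exact Tzero1 y y 0
    · have hc : (⟪x, x⟫ : ℝ) ≠ 0 := inner_self_ne_zero.2 hx
      obtain ⟨a, b, p, hxp, hJxp, hy⟩ :
          ∃ (a b : ℝ) (p : V), ⟪x, p⟫ = 0 ∧ ⟪J x, p⟫ = 0 ∧
            y = a • x + (b • J x + p) := by
        refine ⟨⟪x, y⟫ / ⟪x, x⟫, ⟪J x, y⟫ / ⟪x, x⟫,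
          y - (⟪x, y⟫ / ⟪x, x⟫) • x - (⟪J x, y⟫ / ⟪x, x⟫) • J x, ?_, ?_, by abel⟩
        · simp only [inner_sub_right, real_inner_smul_right]
          rw [hJ0 x]
          field_simp; ring
        · simp only [inner_sub_right, real_inner_smul_right]
          rw [hJorth x x]
          have hJxx : ⟪J x, x⟫ = 0 := by rw [real_inner_comm]; exact hJ0 x
          rw [hJxx]
          field_simp; ring
      have e8 : T x p (J x) x = 0 := by rw [Tsym23end x p (J x)]; exact T8 x p
      have e9 := T9 x p hxp hJxp
      have e7 := T7 x
      have e8' := T8 x p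
      rw [hy]
      simp only [Tadd2, Tadd3, Tsmul2, Tsmul3, Txx, Tcc, e7, e8, e8', e9]
      ring
  -- polarization: T(x,y,z,x) = 0
  have T11 : ∀ x y z : V, T x y z x = 0 := by
    intro x y z
    have e := T10 x (y + z)
    rw [Tadd2] at e
    rw [Tadd3, Tadd3] at e
    have s := Tsym23end x z y
    linarith [T10 x y, T10 x z, e, s]
  -- T is zero
  have Tfin : ∀ x y z u : V, T x y z u = 0 := by
    have ha : ∀ x y z u : V, T x y z u + T u y z x = 0 := by
      intro x y z u
      have e := T11 (x + u) y z
      rw [Tadd1] at e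
      rw [Tadd4, Tadd4] at e
      linarith [T11 x y z, T11 u y z, e]
    have h23 : ∀ x y z u : V, T x y z u = -T x z y u := by
      intro x y z u
      have e := ha x y z u
      have c1 := T2 u y z x   -- T z x u y = T u y z x
      have c2 := T0 x z u y   -- T z x u y = -T x z u y
      have c3 := T1 x z y u   -- T x z u y = -T x z y u
      linarith
    intro x y z u
    have b := T4 x y z u
    have d1 := T0 z y x u    -- T y z x u = -T z y x u
    have d2 := h23 z y x u   -- T z y x u = -T z x y u
    have d3 := T0 x z y u    -- T z x y u = -T x z y u
    have d4 := h23 x y z u   -- T x y z u = -T x z y u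
    linarith
  intro x y z u
  have e := Tfin x y z u
  simp only [hT] at e
  linarith

theorem stmt_4 {V : Type*} [NormedAddCommGroup V] [InnerProductSpace ℝ V]
    [FiniteDimensional ℝ V] (n : ℕ) (hn : 2 ≤ n)
    (hdim : Module.finrank ℝ V = 2 * n)
    (J : V →ₗ[ℝ] V)
    (hJ2 : ∀ x : V, J (J x) = -x)
    (hJorth : ∀ x y : V, ⟪J x, J y⟫ = ⟪x, y⟫)
    (R : V →ₗ[ℝ] V →ₗ[ℝ] V →ₗ[ℝ] V →ₗ[ℝ] ℝ)
    (hR : IsCurvatureLike R)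
    (hRJ : ∀ x y z u : V, R x y z u = R (J x) (J y) (J z) (J u))
    -- `R` has constant antiholomorphic sectional curvature ν
    (ν : ℝ)
    (hν : ∀ x y : V, ‖x‖ = 1 → ‖y‖ = 1 → ⟪x, y⟫ = 0 → ⟪y, J x⟫ = 0 →
      R x y y x = ν) :
    ∀ x y z u : V,
      R x y z u = R x y (J z) (J u) + R x (J y) z (J u) + R (J x) y z (J u) := by
  obtain ⟨hR1, hR2, hR3, hR4⟩ := hR
  have hmixJ : ∀ a b : V, ⟪J a, b⟫ = -⟪a, J b⟫ := by
    intro a b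
    have h := hJorth a (J b)
    rw [hJ2, inner_neg_right] at h
    linarith
  -- the tensor S = R - ν • constCurvTensor V
  obtain ⟨S, Sapp⟩ : ∃ S : V →ₗ[ℝ] V →ₗ[ℝ] V →ₗ[ℝ] V →ₗ[ℝ] ℝ, ∀ x y z u : V,
      S x y z u = R x y z u - ν * (⟪x,u⟫*⟪y,z⟫ - ⟪x,z⟫*⟪y,u⟫) := by
    refine ⟨R + (-ν) • constCurvTensor V, fun x y z u => ?_⟩
    simp only [LinearMap.add_apply, LinearMap.smul_apply, constCurvTensor_apply,
      smul_eq_mul]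
    ring
  -- scaled antiholomorphic curvature condition
  have hA' : ∀ x y : V, ⟪x, y⟫ = 0 → ⟪J x, y⟫ = 0 →
      R x y y x = ν * (⟪x,x⟫ * ⟪y,y⟫) := by
    intro x y hxy hJxy
    by_cases hx : x = 0
    · subst hx; simp
    by_cases hy : y = 0
    · subst hy; simp
    have hx' : ‖x‖ ≠ 0 := norm_ne_zero_iff.2 hx
    have hy' : ‖y‖ ≠ 0 := norm_ne_zero_iff.2 hy
    have hv := hν (‖x‖⁻¹ • x) (‖y‖⁻¹ • y) (norm_smul_inv_norm hx) (norm_smul_inv_norm hy)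
      (by rw [real_inner_smul_left, real_inner_smul_right, hxy]; ring)
      (by
        rw [map_smul, real_inner_smul_left, real_inner_smul_right]
        have : ⟪y, J x⟫ = 0 := by rw [real_inner_comm]; exact hJxy
        rw [this]; ring)
    simp only [map_smul, LinearMap.smul_apply, smul_eq_mul] at hv
    have hxx : ⟪x,x⟫ = ‖x‖ * ‖x‖ := real_inner_self_eq_norm_mul_norm x
    have hyy : ⟪y,y⟫ = ‖y‖ * ‖y‖ := real_inner_self_eq_norm_mul_norm y
    rw [hxx, hyy]
    field_simp at hv
    linear_combination hv
  -- hypotheses of aux_key for S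
  have h1S : ∀ x y z u : V, S x y z u =
      - S y x z u := by
    intro x y z u
    rw [Sapp, Sapp]
    linear_combination hR1 x y z u
  have h2S : ∀ x y z u : V, S x y z u =
      - S x y u z := by
    intro x y z u
    rw [Sapp, Sapp]
    linear_combination hR2 x y z u
  have h3S : ∀ x y z u : V, S x y z u =
      S z u x y := by
    intro x y z u
    rw [Sapp, Sapp]
    rw [real_inner_comm z y, real_inner_comm u x, real_inner_comm z x, real_inner_comm u y]
    linear_combination hR3 x y z u
  have h4S : ∀ x y z u : V, S x y z u +
      S y z x u + S z x y u = 0 := by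
    intro x y z u
    rw [Sapp, Sapp, Sapp]
    rw [real_inner_comm z x, real_inner_comm y x, real_inner_comm z y]
    linear_combination hR4 x y z u
  have hSJS : ∀ x y z u : V, S x y z u =
      S (J x) (J y) (J z) (J u) := by
    intro x y z u
    rw [Sapp, Sapp]
    rw [hJorth x u, hJorth y z, hJorth x z, hJorth y u]
    linear_combination hRJ x y z u
  have hAS : ∀ x y : V, ⟪x, y⟫ = 0 → ⟪J x, y⟫ = 0 →
      S x y y x = 0 := by
    intro x y h h'
    rw [Sapp, hA' x y h h', h]
    ring
  have key := aux_key J hJ2 hJorth S h1S h2S h3S h4S hSJS hAS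
  intro x y z u
  have e := key x y z u
  rw [Sapp, Sapp, Sapp, Sapp] at e
  have hR0id : (⟪x,u⟫*⟪y,z⟫ - ⟪x,z⟫*⟪y,u⟫ : ℝ) =
      (⟪x,J u⟫*⟪y,J z⟫ - ⟪x,J z⟫*⟪y,J u⟫) +
      (⟪x,J u⟫*⟪J y,z⟫ - ⟪x,z⟫*⟪J y,J u⟫) +
      (⟪J x,J u⟫*⟪y,z⟫ - ⟪J x,z⟫*⟪y,J u⟫) := by
    rw [hJorth x u, hJorth y u, hmixJ y z, hmixJ x z]
    ring
  linear_combination e + ν * hR0id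
end

section
/- Let n ≥ 2 and let V be a real inner product space of dimension 2n with orthonormal basis e₁,…,e_{2n}. Let B, B' : V → Bil(V) be linear maps into bilinear forms on V and let t, t' : V → ℝ be linear functionals such that for all x ∈ V: (i) ∑ᵢ B(eᵢ)(x,eᵢ) = (1/2) t(x); (ii) ∑ᵢ B'(eᵢ)(x,eᵢ) = (1/2) t'(x); (iii) (n+1) B(x)(y,z) − 3 B'(x)(y,z) = (((n+1)t(x) − 3t'(x))/(2n)) ⟨y,z⟩ for all y, z ∈ V. Then (n+1) t(x) = 3 t'(x) for all x ∈ V. -/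
open scoped RealInnerProductSpace

theorem stmt_7 {V : Type*} [NormedAddCommGroup V] [InnerProductSpace ℝ V]
    [FiniteDimensional ℝ V] (n : ℕ) (hn : 2 ≤ n)
    (hdim : Module.finrank ℝ V = 2 * n)
    (e : OrthonormalBasis (Fin (2 * n)) ℝ V)
    -- `B`, `B'` are linear maps from `V` into bilinear forms on `V`
    (B B' : V →ₗ[ℝ] V →ₗ[ℝ] V →ₗ[ℝ] ℝ)
    -- `t`, `t'` are linear functionals on `V`
    (t t' : V →ₗ[ℝ] ℝ)
    -- (i) contracted second Bianchi identity for `S`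
    (hi : ∀ x : V, ∑ i, B (e i) x (e i) = (1 / 2) * t x)
    -- (ii) contracted second Bianchi identity for `S'`
    (hii : ∀ x : V, ∑ i, B' (e i) x (e i) = (1 / 2) * t' x)
    -- (iii) the differentiated pointwise identity
    (hiii : ∀ x y z : V, ((n : ℝ) + 1) * B x y z - 3 * B' x y z =
      ((((n : ℝ) + 1) * t x - 3 * t' x) / (2 * (n : ℝ))) * ⟪y, z⟫) :
    ∀ x : V, ((n : ℝ) + 1) * t x = 3 * t' x := by
  intro x
  set f : V → ℝ := fun v => ((n : ℝ) + 1) * t v - 3 * t' v with hf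
  have hx : ∑ i, ⟪e i, x⟫ • e i = x := by
    simpa [e.repr_apply_apply] using e.sum_repr x
  have ht : t x = ∑ i, ⟪e i, x⟫ * t (e i) := by
    conv_lhs => rw [← hx]
    simp [map_sum]
  have ht' : t' x = ∑ i, ⟪e i, x⟫ * t' (e i) := by
    conv_lhs => rw [← hx]
    simp [map_sum]
  have hrepr : ∑ i, f (e i) * ⟪x, e i⟫ = f x := by
    calc ∑ i, f (e i) * ⟪x, e i⟫
        = ∑ i, (((n : ℝ) + 1) * (⟪e i, x⟫ * t (e i))
            - 3 * (⟪e i, x⟫ * t' (e i))) := by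
          refine Finset.sum_congr rfl fun i _ => ?_
          rw [hf, real_inner_comm x (e i)]; ring
      _ = ((n : ℝ) + 1) * ∑ i, ⟪e i, x⟫ * t (e i)
            - 3 * ∑ i, ⟪e i, x⟫ * t' (e i) := by
          rw [Finset.sum_sub_distrib, Finset.mul_sum, Finset.mul_sum]
      _ = f x := by rw [hf, ← ht, ← ht']
  have hsum : ∑ i, (((n : ℝ) + 1) * B (e i) x (e i) - 3 * B' (e i) x (e i))
      = (1 / 2) * f x := by
    rw [Finset.sum_sub_distrib, ← Finset.mul_sum, ← Finset.mul_sum, hi, hii, hf]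
    ring
  have hsum' : ∑ i, (((n : ℝ) + 1) * B (e i) x (e i) - 3 * B' (e i) x (e i))
      = (1 / (2 * (n : ℝ))) * f x := by
    calc ∑ i, (((n : ℝ) + 1) * B (e i) x (e i) - 3 * B' (e i) x (e i))
        = ∑ i, (f (e i) / (2 * (n : ℝ))) * ⟪x, e i⟫ := by
          refine Finset.sum_congr rfl fun i _ => ?_
          exact hiii (e i) x (e i)
      _ = (1 / (2 * (n : ℝ))) * ∑ i, f (e i) * ⟪x, e i⟫ := by
          rw [Finset.mul_sum]; refine Finset.sum_congr rfl fun i _ => ?_; ring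
      _ = (1 / (2 * (n : ℝ))) * f x := by rw [hrepr]
  have h2n : (2 : ℝ) ≤ (n : ℝ) := by exact_mod_cast hn
  have hne : (1 : ℝ) / 2 - 1 / (2 * (n : ℝ)) ≠ 0 := by
    have : 1 / (2 * (n : ℝ)) ≤ 1 / 4 := by
      rw [div_le_div_iff₀ (by linarith) (by norm_num)]; linarith
    linarith
  have h0 : ((1 : ℝ) / 2 - 1 / (2 * (n : ℝ))) * f x = 0 := by
    rw [sub_mul]
    linarith [hsum.symm.trans hsum']
  rcases mul_eq_zero.1 h0 with h | h
  · exact absurd h hne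
  · have : ((n : ℝ) + 1) * t x - 3 * t' x = 0 := h
    linarith
end

section
/- Let n ≥ 3 and let V be a real inner product space of dimension 2n with an orthogonal complex structure J. Let T : V → Bil(V) be a linear map into symmetric bilinear forms on V, and let a, t : V → ℝ be linear functionals such that: (i) for every x ∈ V and every orthonormal basis e₁,…,e_{2n} of V, ∑ᵢ T(x)(eᵢ,eᵢ) = t(x) and ∑ᵢ T(eᵢ)(x,eᵢ) = (1/2) t(x); (ii) for all orthonormal x, y ∈ V with ⟨y, Jx⟩ = 0: 4(n−1) a(x) = T(x)(y,y) + T(x)(Jy,Jy) − T(y)(x,y) − T(Jy)(x,Jy); (iii) for every unit vector x ∈ V: 4(n−1) a(x) = (1/2) t(x) − T(x)(Jx,Jx) + T(Jx)(x,Jx). Then a(x) = 0 for all x ∈ V. -/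
open scoped RealInnerProductSpace

set_option maxHeartbeats 2000000

theorem stmt_8 {V : Type*} [NormedAddCommGroup V] [InnerProductSpace ℝ V]
    [FiniteDimensional ℝ V] (n : ℕ) (hn : 3 ≤ n)
    (hdim : Module.finrank ℝ V = 2 * n)
    (J : V →ₗ[ℝ] V)
    (hJ2 : ∀ x : V, J (J x) = -x)
    (hJorth : ∀ x y : V, ⟪J x, J y⟫ = ⟪x, y⟫)
    -- `T` is a linear map from `V` into symmetric bilinear forms on `V`
    (T : V →ₗ[ℝ] V →ₗ[ℝ] V →ₗ[ℝ] ℝ)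
    (hTsymm : ∀ x y z : V, T x y z = T x z y)
    -- `a`, `t` are linear functionals on `V`
    (a t : V →ₗ[ℝ] ℝ)
    -- (i) the definition of τ and the contracted second Bianchi identity
    (hi : ∀ x : V, ∀ e : OrthonormalBasis (Fin (2 * n)) ℝ V,
      (∑ i, T x (e i) (e i) = t x) ∧ (∑ i, T (e i) x (e i) = (1 / 2) * t x))
    -- (ii) identity (12) of the paper
    (hii : ∀ x y : V, ‖x‖ = 1 → ‖y‖ = 1 → ⟪x, y⟫ = 0 → ⟪y, J x⟫ = 0 →
      4 * ((n : ℝ) - 1) * a x =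
        T x y y + T x (J y) (J y) - T y x y - T (J y) x (J y))
    -- (iii) identity (13) of the paper
    (hiii : ∀ x : V, ‖x‖ = 1 →
      4 * ((n : ℝ) - 1) * a x =
        (1 / 2) * t x - T x (J x) (J x) + T (J x) x (J x)) :
    ∀ x : V, a x = 0 := by
  -- reduce to unit vectors
  have key : ∀ x : V, ‖x‖ = 1 → a x = 0 := by
    intro x hx
    -- basic facts about J
    have hJnorm : ∀ y : V, ‖J y‖ = ‖y‖ := by
      intro y
      have : ⟪J y, J y⟫ = ⟪y, y⟫ := hJorth y y
      rw [real_inner_self_eq_norm_mul_norm, real_inner_self_eq_norm_mul_norm] at this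
      nlinarith [norm_nonneg (J y), norm_nonneg y]
    have hxJx : ⟪x, J x⟫ = 0 := by
      have h1 : ⟪J x, J (J x)⟫ = ⟪x, J x⟫ := hJorth x (J x)
      rw [hJ2 x] at h1
      have h2 : ⟪J x, -x⟫ = -⟪x, J x⟫ := by
        rw [inner_neg_right, real_inner_comm]
      rw [h2] at h1
      linarith
    -- the linear isometry equivalence given by J
    have hJinv1 : J ∘ₗ (-J) = LinearMap.id := by
      ext y; simp [hJ2 y]
    have hJinv2 : (-J) ∘ₗ J = LinearMap.id := by
      ext y; simp [hJ2 y]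
    let Jeq : V ≃ₗ[ℝ] V := LinearEquiv.ofLinear J (-J) hJinv1 hJinv2
    let Jiso : V ≃ₗᵢ[ℝ] V := Jeq.isometryOfInner (fun u v => hJorth u v)
    have hJiso : ∀ y : V, Jiso y = J y := fun y => rfl
    -- extend {x, Jx} to an orthonormal basis
    have hcard : Module.finrank ℝ V = Fintype.card (Fin (2 * n)) := by simp [hdim]
    haveI : NeZero (2 * n) := ⟨by omega⟩
    have h01 : (0 : Fin (2 * n)) ≠ 1 := by
      simp [Fin.ext_iff, Fin.val_one', Nat.mod_eq_of_lt (show 1 < 2 * n by omega)]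
    set v : Fin (2 * n) → V := fun i => if i = 0 then x else J x with hv
    have hon : Orthonormal ℝ (Set.restrict ({0, 1} : Set (Fin (2 * n))) v) := by
      have hJxx : ⟪J x, x⟫ = 0 := by rw [real_inner_comm]; exact hxJx
      constructor
      · rintro ⟨i, hi'⟩
        simp only [Set.mem_insert_iff, Set.mem_singleton_iff] at hi'
        simp only [Set.restrict_apply, Set.domRestrict_apply, Set.restrict, Set.domRestrict, hv]
        rcases hi' with rfl | rfl
        · simp [hx]
        · simp [h01.symm, hJnorm, hx]
      · rintro ⟨i, hi'⟩ ⟨j, hj'⟩ hij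
        have hij' : i ≠ j := by simpa [Subtype.ext_iff] using hij
        simp only [Set.mem_insert_iff, Set.mem_singleton_iff] at hi' hj'
        simp only [Set.restrict_apply, Set.domRestrict_apply, Set.restrict, Set.domRestrict, hv]
        rcases hi' with rfl | rfl <;> rcases hj' with rfl | rfl <;>
          first
          | exact absurd rfl hij'
          | simp [h01, h01.symm, hxJx, hJxx]
    obtain ⟨b, hb⟩ := Orthonormal.exists_orthonormalBasis_extension_of_card_eq hcard hon
    have hb0 : b 0 = x := by simpa [hv] using hb 0 (by simp)
    have hb1 : b 1 = J x := by
      have := hb 1 (by simp)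
      simpa [hv, h01.symm] using this
    -- the rotated basis
    set b' : OrthonormalBasis (Fin (2 * n)) ℝ V := b.map Jiso with hb'def
    have hb'app : ∀ i, b' i = J (b i) := by
      intro i; rw [hb'def, OrthonormalBasis.map_apply]; rfl
    -- sums over the full bases
    obtain ⟨hA1, hA2⟩ := hi x b
    obtain ⟨hB1, hB2⟩ := hi x b'
    -- split off indices 0 and 1
    set s : Finset (Fin (2 * n)) := Finset.univ \ {0, 1} with hs
    have hsplit : ∀ f : Fin (2 * n) → ℝ,
        ∑ i, f i = f 0 + f 1 + ∑ i ∈ s, f i := by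
      intro f
      have hsub : ({0, 1} : Finset (Fin (2 * n))) ⊆ Finset.univ := Finset.subset_univ _
      have := Finset.sum_sdiff (f := f) hsub
      rw [Finset.sum_pair h01] at this
      rw [hs]
      linarith
    have hscard : (s.card : ℝ) = 2 * n - 2 := by
      have : s.card = Finset.univ.card - ({0,1} : Finset (Fin (2 * n))).card :=
        Finset.card_sdiff_of_subset (Finset.subset_univ _)
      rw [Finset.card_pair h01, Finset.card_univ, Fintype.card_fin] at this
      rw [this]
      have h2n : 2 ≤ 2 * n := by omega
      push_cast [Nat.cast_sub h2n]
      ring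
    -- properties of basis vectors with index in s
    have hmem : ∀ i ∈ s, i ≠ 0 ∧ i ≠ 1 := by
      intro i hi'
      rw [hs] at hi'
      simp only [Finset.mem_sdiff, Finset.mem_insert, Finset.mem_singleton] at hi'
      tauto
    -- apply (ii) to each b i, i ∈ s
    have hterm : ∀ i ∈ s, 4 * ((n : ℝ) - 1) * a x =
        T x (b i) (b i) + T x (J (b i)) (J (b i)) - T (b i) x (b i)
          - T (J (b i)) x (J (b i)) := by
      intro i hi'
      obtain ⟨h0, h1⟩ := hmem i hi'
      have hnorm : ‖b i‖ = 1 := b.orthonormal.1 i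
      have hinner0 : ⟪x, b i⟫ = 0 := by
        rw [← hb0]; exact b.orthonormal.2 (Ne.symm h0)
      have hinner1 : ⟪b i, J x⟫ = 0 := by
        rw [← hb1]; exact b.orthonormal.2 h1
      exact hii x (b i) hx hnorm hinner0 hinner1
    have hsum : ∑ i ∈ s, (4 * ((n : ℝ) - 1) * a x) =
        ∑ i ∈ s, (T x (b i) (b i) + T x (J (b i)) (J (b i)) - T (b i) x (b i)
          - T (J (b i)) x (J (b i))) := Finset.sum_congr rfl hterm
    rw [Finset.sum_const, nsmul_eq_mul] at hsum
    -- compute the partial sums from (i)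
    have e1 : ∑ i ∈ s, T x (b i) (b i) = t x - T x x x - T x (J x) (J x) := by
      have := hsplit (fun i => T x (b i) (b i))
      rw [hA1, hb0, hb1] at this
      linarith
    have e2 : ∑ i ∈ s, T (b i) x (b i) = (1/2) * t x - T x x x - T (J x) x (J x) := by
      have := hsplit (fun i => T (b i) x (b i))
      rw [hA2, hb0, hb1] at this
      linarith
    have hJJx : T x (J (J x)) (J (J x)) = T x x x := by
      rw [hJ2 x]; simp
    have hJJx' : T (J (J x)) x (J (J x)) = T x x x := by
      rw [hJ2 x]; simp
    have e3 : ∑ i ∈ s, T x (J (b i)) (J (b i)) = t x - T x (J x) (J x) - T x x x := by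
      have := hsplit (fun i => T x (b' i) (b' i))
      rw [hB1] at this
      simp only [hb'app, hb0, hb1] at this ⊢
      rw [hJJx] at this
      linarith
    have e4 : ∑ i ∈ s, T (J (b i)) x (J (b i)) =
        (1/2) * t x - T (J x) x (J x) - T x x x := by
      have := hsplit (fun i => T (b' i) x (b' i))
      rw [hB2] at this
      simp only [hb'app, hb0, hb1] at this ⊢
      rw [hJJx'] at this
      linarith
    rw [Finset.sum_sub_distrib, Finset.sum_sub_distrib, Finset.sum_add_distrib,
      e1, e2, e3, e4, hscard] at hsum
    have h3 := hiii x hx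
    -- conclude
    have hfinal : (2 * (n : ℝ) - 2) * (4 * ((n : ℝ) - 1) * a x)
        = 2 * (4 * ((n : ℝ) - 1) * a x) := by
      rw [hsum, h3]; ring
    have hn3 : (3 : ℝ) ≤ n := by exact_mod_cast hn
    have hK : (2 * (n : ℝ) - 4) * (4 * ((n : ℝ) - 1) * a x) = 0 := by
      linear_combination hfinal
    have hpos : (0 : ℝ) < 2 * (n : ℝ) - 4 := by linarith
    have hpos2 : (0 : ℝ) < 4 * ((n : ℝ) - 1) := by linarith
    rcases mul_eq_zero.1 hK with h | h
    · exact absurd h (ne_of_gt hpos)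
    · exact (mul_eq_zero.1 h).resolve_left (ne_of_gt hpos2)
  intro x
  rcases eq_or_ne x 0 with rfl | hx0
  · simp
  · have hnx : ‖x‖ ≠ 0 := norm_ne_zero_iff.mpr hx0
    have := key (‖x‖⁻¹ • x) (by rw [norm_smul]; simp [hnx, abs_of_nonneg])
    rw [map_smul, smul_eq_mul] at this
    rcases mul_eq_zero.1 this with h | h
    · exact absurd h (inv_ne_zero hnx)
    · exact h
end
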